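/- arXiv:2012.04364 — 10 statements merged into one kernel-verified Lean document; each statement's English description precedes it below -/
import Mathlib

section
/- Suppose the asset payoffs Y = (Y₀, Y₁, …, Yₙ) are square-integrable with Y₀ = e^r a.s. for a constant r ≥ 0, and let S⊥ be a square-integrable liability that is independent of the random vector (Y₁, …, Yₙ). Then the strategy θ = (e^{−r}·E[S⊥], 0, …, 0), which invests only in the risk-free asset, minimizes β ↦ E[(S⊥ − β·Y)²] over β ∈ ℝ^{n+1}. -/
open MeasureTheory

lemma indep_quadratic_aux
    {Ω : Type*} [MeasureSpace Ω] [IsProbabilityMeasure (volume : Measure Ω)]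
    (X Z : Ω → ℝ) (hX : MemLp X 2 volume) (hZ : MemLp Z 2 volume)
    (h : ProbabilityTheory.IndepFun X Z volume) :
    (∫ ω, (X ω - ∫ ω, X ω) ^ 2) ≤ ∫ ω, (X ω - Z ω) ^ 2 := by
  have hXi : Integrable X volume := hX.integrable one_le_two
  have hZi : Integrable Z volume := hZ.integrable one_le_two
  have hX2 : Integrable (fun ω => X ω ^ 2) volume := hX.integrable_sq
  have hZ2 : Integrable (fun ω => Z ω ^ 2) volume := hZ.integrable_sq
  have hXZ : Integrable (fun ω => X ω * Z ω) volume := h.integrable_mul hXi hZi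
  set m := ∫ ω, X ω with hm
  set μZ := ∫ ω, Z ω with hμZ
  have hmul : (∫ ω, X ω * Z ω) = m * μZ := ProbabilityTheory.IndepFun.integral_mul_eq_mul_integral h hXi.1 hZi.1
  -- left side
  have hL : (∫ ω, (X ω - m) ^ 2) = (∫ ω, X ω ^ 2) - m ^ 2 := by
    have : ∀ ω, (X ω - m) ^ 2 = X ω ^ 2 - (2 * m) * X ω + m ^ 2 := by intro ω; ring
    simp_rw [this]
    have e1 : Integrable (fun ω => X ω ^ 2 - 2 * m * X ω) volume := hX2.sub (hXi.const_mul _)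
    rw [integral_add e1 (integrable_const _), integral_sub hX2 (hXi.const_mul _),
      integral_const_mul _ _, integral_const]
    simp [← hm]
    ring
  -- right side
  have hR : (∫ ω, (X ω - Z ω) ^ 2)
      = (∫ ω, X ω ^ 2) - 2 * (m * μZ) + ∫ ω, Z ω ^ 2 := by
    have : ∀ ω, (X ω - Z ω) ^ 2 = X ω ^ 2 - 2 * (X ω * Z ω) + Z ω ^ 2 := by
      intro ω; ring
    simp_rw [this]
    have e1 : Integrable (fun ω => X ω ^ 2 - 2 * (X ω * Z ω)) volume := hX2.sub (hXZ.const_mul _)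
    rw [integral_add e1 hZ2, integral_sub hX2 (hXZ.const_mul _), integral_const_mul _ _, hmul]
  have hvar : μZ ^ 2 ≤ ∫ ω, Z ω ^ 2 := by
    have h1 := ProbabilityTheory.variance_nonneg Z (volume : Measure Ω)
    have h2 := ProbabilityTheory.variance_eq_sub hZ
    simp only [Pi.pow_apply] at h2
    rw [h2] at h1
    linarith [h1]
  rw [hL, hR]
  nlinarith [sq_nonneg (m - μZ)]

/-- If `Y₀ = e^r` a.s. (with `r ≥ 0`) and the square-integrable liability `S⊥` is
independent of the random vector `(Y₁, …, Yₙ)`, then the strategy investing only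
`e^{−r}·E[S⊥]` in the risk-free asset minimizes `β ↦ E[(S⊥ − β·Y)²]`. -/
theorem riskfree_quadratic_hedge_of_indep
    {Ω : Type*} [MeasureSpace Ω] [IsProbabilityMeasure (volume : Measure Ω)]
    (n : ℕ) (Y : Fin (n + 1) → Ω → ℝ)
    (hY : ∀ i, MemLp (Y i) 2 volume)
    (r : ℝ) (hr : 0 ≤ r) (hY0 : ∀ᵐ ω, Y 0 ω = Real.exp r)
    (Sp : Ω → ℝ) (hSp : MemLp Sp 2 volume)
    (hIndep : ProbabilityTheory.IndepFun Sp (fun ω (i : Fin n) => Y i.succ ω) volume)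
    (θ : Fin (n + 1) → ℝ)
    (hθdef : θ = fun i => if i = 0 then Real.exp (-r) * ∫ ω, Sp ω else 0) :
    ∀ β : Fin (n + 1) → ℝ,
      (∫ ω, (Sp ω - ∑ i, θ i * Y i ω) ^ 2) ≤ ∫ ω, (Sp ω - ∑ i, β i * Y i ω) ^ 2 := by
  intro β
  set m := ∫ ω, Sp ω with hm
  -- LHS: θ·Y = m a.e.
  have hLHS : (∫ ω, (Sp ω - ∑ i, θ i * Y i ω) ^ 2) = ∫ ω, (Sp ω - m) ^ 2 := by
    refine integral_congr_ae ?_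
    filter_upwards [hY0] with ω h0
    have : (∑ i, θ i * Y i ω) = m := by
      rw [hθdef, Fin.sum_univ_succ]
      simp only [if_pos rfl]
      have : ∀ i : Fin n, (if (i.succ : Fin (n+1)) = 0 then Real.exp (-r) * m else 0) * Y i.succ ω = 0 := by
        intro i
        rw [if_neg (Fin.succ_ne_zero i)]
        ring
      simp_rw [this]
      rw [h0, Real.exp_neg]
      field_simp
      simp only [if_true, Finset.sum_const_zero, add_zero]
      field_simp
    rw [this]
  -- RHS: β·Y = Z a.e. with Z a function of the indep vector plus constant
  set Z : Ω → ℝ := fun ω => β 0 * Real.exp r + ∑ i : Fin n, β i.succ * Y i.succ ω with hZdef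
  have hRHS : (∫ ω, (Sp ω - ∑ i, β i * Y i ω) ^ 2) = ∫ ω, (Sp ω - Z ω) ^ 2 := by
    refine integral_congr_ae ?_
    filter_upwards [hY0] with ω h0
    rw [Fin.sum_univ_succ, h0]
  have hZmem : MemLp Z 2 volume := by
    refine MemLp.add (f := fun _ => β 0 * Real.exp r)
      (g := fun ω => ∑ i : Fin n, β i.succ * Y i.succ ω) (memLp_const _) ?_
    exact memLp_finsetSum (f := fun (i : Fin n) (ω : Ω) => β i.succ * Y i.succ ω)
      Finset.univ (fun i _ => ((hY i.succ).const_mul _))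
  have hZindep : ProbabilityTheory.IndepFun Sp Z volume := by
    have hg : Measurable (fun v : Fin n → ℝ => β 0 * Real.exp r + ∑ i, β i.succ * v i) := by
      exact measurable_const.add (Finset.measurable_sum _ fun i _ =>
        (measurable_pi_apply i).const_mul _)
    exact hIndep.comp measurable_id hg
  rw [hLHS, hRHS, hm]
  exact indep_quadratic_aux Sp Z hSp hZmem hZindep
end

section
/- Let X be an integrable random variable and α ∈ (0,1). Then the lower α-quantile VaR_α(X) = inf{x ∈ ℝ : P(X ≤ x) ≥ α} is a minimizer of the map c ↦ E[ℓ_α(X − c)] over c ∈ ℝ, where ℓ_α is the normalised Koenker–Bassett loss. -/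
open MeasureTheory Filter Topology

/-- Value-at-Risk at level `α`: the lower `α`-quantile
`VaR_α(X) = inf {x ∈ ℝ : P(X ≤ x) ≥ α}`. -/
noncomputable def VaR {Ω : Type*} [MeasureSpace Ω] (X : Ω → ℝ) (α : ℝ) : ℝ :=
  sInf {x : ℝ | α ≤ (volume {ω | X ω ≤ x}).toReal}

/-- The normalised Koenker–Bassett loss at level `α`:
`ℓ_α(x) = (α/(1−α))·max(x,0) + max(−x,0)`. -/
noncomputable def KBLoss (α x : ℝ) : ℝ :=
  α / (1 - α) * max x 0 + max (-x) 0

/-- For an integrable random variable `X` and `α ∈ (0,1)`, the lower `α`-quantile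
`VaR_α(X)` minimizes `c ↦ E[ℓ_α(X − c)]` over `c ∈ ℝ`. -/
theorem VaR_minimizes_KB_error
    {Ω : Type*} [MeasureSpace Ω] [IsProbabilityMeasure (volume : Measure Ω)]
    (X : Ω → ℝ) (hX : Integrable X volume)
    (α : ℝ) (hα : α ∈ Set.Ioo (0 : ℝ) 1) :
    ∀ c : ℝ,
      (∫ ω, KBLoss α (X ω - VaR X α)) ≤ ∫ ω, KBLoss α (X ω - c) := by
  obtain ⟨hα0, hα1⟩ := hα
  have h1α : (0:ℝ) < 1 - α := by linarith
  intro c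
  have hXae : AEMeasurable X volume := hX.aemeasurable
  set Y : Ω → ℝ := hXae.mk X with hYdef
  have hYm : Measurable Y := hXae.measurable_mk
  have hXY : X =ᵐ[volume] Y := hXae.ae_eq_mk
  have hYint : Integrable Y volume := hX.congr hXY
  -- the CDF, in terms of the measurable representative
  set F : ℝ → ℝ := fun x => (volume {ω | Y ω ≤ x}).toReal with hFdef
  have hFeq : ∀ x : ℝ, volume {ω | X ω ≤ x} = volume {ω | Y ω ≤ x} := by
    intro x
    refine measure_congr ?_
    rw [Filter.eventuallyEq_set]
    filter_upwards [hXY] with ω h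
    simp [h]
  have hFfin : ∀ x : ℝ, volume {ω | Y ω ≤ x} ≠ ⊤ := fun x => measure_ne_top _ _
  have hFmono : Monotone F := by
    intro a b hab
    exact ENNReal.toReal_mono (hFfin b)
      (measure_mono (fun ω h => le_trans h hab))
  set S : Set ℝ := {x : ℝ | α ≤ F x} with hSdef
  have hVaR : VaR X α = sInf S := by
    unfold VaR
    congr 1
    ext x
    simp [hSdef, hFdef, hFeq x]
  set q : ℝ := sInf S with hq
  -- S is nonempty
  have hSne : S.Nonempty := by
    have hmon : Monotone (fun n : ℕ => {ω | Y ω ≤ (n:ℝ)}) := by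
      intro a b hab ω h
      simp only [Set.mem_setOf_eq] at h ⊢
      exact le_trans h (by exact_mod_cast hab)
    have hU : (⋃ n : ℕ, {ω | Y ω ≤ (n:ℝ)}) = Set.univ := by
      ext ω
      simp only [Set.mem_iUnion, Set.mem_setOf_eq, Set.mem_univ, iff_true]
      obtain ⟨n, hn⟩ := exists_nat_ge (Y ω)
      exact ⟨n, hn⟩
    have htd : Tendsto (fun n : ℕ => volume {ω | Y ω ≤ (n:ℝ)}) atTop
        (𝓝 (volume (Set.univ : Set Ω))) := by
      have := tendsto_measure_iUnion_atTop (μ := (volume : Measure Ω)) hmon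
      rwa [hU] at this
    have htr : Tendsto (fun n : ℕ => F (n:ℝ)) atTop (𝓝 1) := by
      have h2 : Tendsto (fun n : ℕ => (volume {ω | Y ω ≤ (n:ℝ)}).toReal) atTop
          (𝓝 (volume (Set.univ : Set Ω)).toReal) :=
        (ENNReal.tendsto_toReal (measure_ne_top _ _)).comp htd
      simpa [measure_univ] using h2
    have : ∀ᶠ n : ℕ in atTop, α ≤ F (n:ℝ) :=
      htr.eventually (eventually_ge_nhds hα1)
    obtain ⟨n, hn⟩ := this.exists
    exact ⟨(n:ℝ), hn⟩
  -- S is bounded below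
  have hSbdd : BddBelow S := by
    have hanti : Antitone (fun n : ℕ => {ω | Y ω ≤ -(n:ℝ)}) := by
      intro a b hab ω h
      simp only [Set.mem_setOf_eq] at h ⊢
      refine le_trans h (neg_le_neg ?_)
      exact_mod_cast hab
    have hI : (⋂ n : ℕ, {ω | Y ω ≤ -(n:ℝ)}) = ∅ := by
      ext ω
      simp only [Set.mem_iInter, Set.mem_setOf_eq, Set.mem_empty_iff_false, iff_false, not_forall]
      obtain ⟨n, hn⟩ := exists_nat_gt (-(Y ω))
      exact ⟨n, by push_neg; linarith⟩
    have htd : Tendsto (fun n : ℕ => volume {ω | Y ω ≤ -(n:ℝ)}) atTop (𝓝 0) := by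
      have := tendsto_measure_iInter_atTop (μ := (volume : Measure Ω))
        (s := fun n : ℕ => {ω | Y ω ≤ -(n:ℝ)})
        (fun n => (hYm measurableSet_Iic (t := Set.Iic (-(n:ℝ)))).nullMeasurableSet) hanti
        ⟨0, measure_ne_top _ _⟩
      rwa [hI, measure_empty] at this
    have htr : Tendsto (fun n : ℕ => F (-(n:ℝ))) atTop (𝓝 0) := by
      have h2 := (ENNReal.tendsto_toReal (by simp : (0:ENNReal) ≠ ⊤)).comp htd
      exact h2
    have : ∀ᶠ n : ℕ in atTop, F (-(n:ℝ)) < α :=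
      htr.eventually (eventually_lt_nhds hα0)
    obtain ⟨n, hn⟩ := this.exists
    refine ⟨-(n:ℝ), fun s hs => ?_⟩
    by_contra hcon
    push_neg at hcon
    exact absurd (le_trans hs (hFmono hcon.le)) (not_le.2 hn)
  -- key fact A : α ≤ F q
  have hA : α ≤ F q := by
    have hstep : ∀ n : ℕ, α ≤ F (q + 1/(n+1)) := by
      intro n
      have hpos : (0:ℝ) < 1/((n:ℝ)+1) := by positivity
      obtain ⟨s, hsS, hs⟩ := Real.lt_sInf_add_pos hSne hpos
      exact le_trans hsS (hFmono (by rw [← hq] at hs; linarith))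
    have hanti : Antitone (fun n : ℕ => {ω | Y ω ≤ q + 1/((n:ℝ)+1)}) := by
      intro a b hab ω h
      simp only [Set.mem_setOf_eq] at h ⊢
      refine le_trans h ?_
      have hab' : (a:ℝ) ≤ (b:ℝ) := Nat.cast_le.2 hab
      have : (1:ℝ)/((b:ℝ)+1) ≤ 1/((a:ℝ)+1) := by
        apply one_div_le_one_div_of_le (by positivity)
        linarith
      linarith
    have hI : (⋂ n : ℕ, {ω | Y ω ≤ q + 1/((n:ℝ)+1)}) = {ω | Y ω ≤ q} := by
      ext ω
      simp only [Set.mem_iInter, Set.mem_setOf_eq]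
      constructor
      · intro h
        by_contra hcon
        push_neg at hcon
        obtain ⟨n, hn⟩ := exists_nat_one_div_lt (by linarith : (0:ℝ) < Y ω - q)
        have := h n
        linarith
      · intro h n
        have : (0:ℝ) < 1/((n:ℝ)+1) := by positivity
        linarith
    have htd : Tendsto (fun n : ℕ => volume {ω | Y ω ≤ q + 1/((n:ℝ)+1)}) atTop
        (𝓝 (volume {ω | Y ω ≤ q})) := by
      have := tendsto_measure_iInter_atTop (μ := (volume : Measure Ω))
        (s := fun n : ℕ => {ω | Y ω ≤ q + 1/((n:ℝ)+1)})
        (fun n => (hYm measurableSet_Iic (t := Set.Iic (q + 1/((n:ℝ)+1)))).nullMeasurableSet)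
        hanti ⟨0, measure_ne_top _ _⟩
      rwa [hI] at this
    have htr : Tendsto (fun n : ℕ => F (q + 1/((n:ℝ)+1))) atTop (𝓝 (F q)) :=
      (ENNReal.tendsto_toReal (measure_ne_top _ _)).comp htd
    exact ge_of_tendsto' htr hstep
  -- key fact B : P(Y < q) ≤ α
  have hB : (volume {ω | Y ω < q}).toReal ≤ α := by
    have hmon : Monotone (fun n : ℕ => {ω | Y ω ≤ q - 1/((n:ℝ)+1)}) := by
      intro a b hab ω h
      simp only [Set.mem_setOf_eq] at h ⊢
      have hab' : (a:ℝ) ≤ (b:ℝ) := Nat.cast_le.2 hab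
      have : (1:ℝ)/((b:ℝ)+1) ≤ 1/((a:ℝ)+1) := by
        apply one_div_le_one_div_of_le (by positivity)
        linarith
      linarith
    have hU : (⋃ n : ℕ, {ω | Y ω ≤ q - 1/((n:ℝ)+1)}) = {ω | Y ω < q} := by
      ext ω
      simp only [Set.mem_iUnion, Set.mem_setOf_eq]
      constructor
      · rintro ⟨n, hn⟩
        have : (0:ℝ) < 1/((n:ℝ)+1) := by positivity
        linarith
      · intro h
        obtain ⟨n, hn⟩ := exists_nat_one_div_lt (by linarith : (0:ℝ) < q - Y ω)
        exact ⟨n, by linarith⟩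
    have htd : Tendsto (fun n : ℕ => volume {ω | Y ω ≤ q - 1/((n:ℝ)+1)}) atTop
        (𝓝 (volume {ω | Y ω < q})) := by
      have := tendsto_measure_iUnion_atTop (μ := (volume : Measure Ω))
        (s := fun n : ℕ => {ω | Y ω ≤ q - 1/((n:ℝ)+1)}) hmon
      rwa [hU] at this
    have htr : Tendsto (fun n : ℕ => F (q - 1/((n:ℝ)+1))) atTop
        (𝓝 (volume {ω | Y ω < q}).toReal) :=
      (ENNReal.tendsto_toReal (measure_ne_top _ _)).comp htd
    refine le_of_tendsto' htr (fun n => ?_)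
    have hlt : q - 1/((n:ℝ)+1) < sInf S := by
      have : (0:ℝ) < 1/((n:ℝ)+1) := by positivity
      rw [← hq]; linarith
    have hnot : q - 1/((n:ℝ)+1) ∉ S := fun hmem => absurd (csInf_le hSbdd hmem) (not_le.2 hlt)
    have : ¬ (α ≤ F (q - 1/((n:ℝ)+1))) := hnot
    linarith [not_le.1 this]
  -- decomposition of the loss
  have hKB : ∀ x : ℝ, KBLoss α x = (1/(1-α)) * (α * x + max (-x) 0) := by
    intro x
    unfold KBLoss
    rcases le_total x 0 with h | h
    · rw [max_eq_right h, max_eq_left (by linarith : (0:ℝ) ≤ -x)]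
      field_simp
      ring
    · rw [max_eq_left h, max_eq_right (by linarith : -x ≤ (0:ℝ))]
      field_simp
      ring
  have hGint : ∀ b : ℝ, Integrable (fun ω => max (b - Y ω) 0) volume :=
    fun b => ((integrable_const b).sub hYint).sup (integrable_const 0)
  have hIval : ∀ b : ℝ, (∫ ω, KBLoss α (Y ω - b)) =
      (1/(1-α)) * (α * ((∫ ω, Y ω) - b) + ∫ ω, max (b - Y ω) 0) := by
    intro b
    calc ∫ ω, KBLoss α (Y ω - b)
        = ∫ ω, (1/(1-α)) * (α * (Y ω - b) + max (b - Y ω) 0) := by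
          congr 1; funext ω; rw [hKB, neg_sub]
      _ = (1/(1-α)) * ∫ ω, (α * (Y ω - b) + max (b - Y ω) 0) := integral_const_mul _ _
      _ = (1/(1-α)) * ((∫ ω, α * (Y ω - b)) + ∫ ω, max (b - Y ω) 0) := by
          have hi1 : Integrable (fun ω => α * (Y ω - b)) volume := by
            exact (hYint.sub (integrable_const b)).const_mul α
          rw [integral_add hi1 (hGint b)]
      _ = (1/(1-α)) * (α * ((∫ ω, Y ω) - b) + ∫ ω, max (b - Y ω) 0) := by
          have hi2 : (∫ ω, (Y ω - b)) = (∫ ω, Y ω) - b := by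
            rw [integral_sub hYint (integrable_const b), integral_const]
            simp
          rw [integral_const_mul, hi2]
  -- the key inequality
  have hkey : α * (c - q) + (∫ ω, max (q - Y ω) 0) ≤ ∫ ω, max (c - Y ω) 0 := by
    rcases le_total q c with hqc | hcq
    · -- c ≥ q : compare with indicator of {Y ≤ q}
      have hms : MeasurableSet {ω | Y ω ≤ q} := hYm measurableSet_Iic
      have hindint : Integrable
          (fun ω => (c - q) * Set.indicator {ω | Y ω ≤ q} (fun _ => (1:ℝ)) ω) volume :=
        ((integrable_const (1:ℝ)).indicator hms).const_mul _
      have hpt : ∀ ω, (fun ω => max (q - Y ω) 0 +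
          (c - q) * Set.indicator {ω | Y ω ≤ q} (fun _ => (1:ℝ)) ω) ω ≤
          (fun ω => max (c - Y ω) 0) ω := by
        intro ω
        simp only
        by_cases h : Y ω ≤ q
        · rw [Set.indicator_of_mem (show ω ∈ {ω | Y ω ≤ q} from h)]
          have h1 : max (q - Y ω) 0 = q - Y ω := max_eq_left (by linarith)
          have h2 : c - Y ω ≤ max (c - Y ω) 0 := le_max_left _ _
          rw [h1]; linarith
        · rw [Set.indicator_of_notMem (show ω ∉ {ω | Y ω ≤ q} from h)]
          push_neg at h
          simp only [mul_zero, add_zero]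
          exact max_le_max (by linarith) le_rfl
      have hmono := integral_mono ((hGint q).add hindint) (hGint c) hpt
      simp only [Pi.add_apply] at hmono
      rw [integral_add (hGint q) hindint, integral_const_mul,
        integral_indicator_const (1:ℝ) hms] at hmono
      have hFq : α * (c - q) ≤ (c - q) * ((volume {ω | Y ω ≤ q}).toReal * 1) := by
        have : α ≤ (volume {ω | Y ω ≤ q}).toReal := hA
        nlinarith
      simp only [smul_eq_mul, Measure.real] at hmono
      linarith
    · -- c ≤ q : compare with indicator of {Y < q}
      have hms : MeasurableSet {ω | Y ω < q} := hYm measurableSet_Iio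
      have hindint : Integrable
          (fun ω => (c - q) * Set.indicator {ω | Y ω < q} (fun _ => (1:ℝ)) ω) volume :=
        ((integrable_const (1:ℝ)).indicator hms).const_mul _
      have hpt : ∀ ω, (fun ω => max (q - Y ω) 0 +
          (c - q) * Set.indicator {ω | Y ω < q} (fun _ => (1:ℝ)) ω) ω ≤
          (fun ω => max (c - Y ω) 0) ω := by
        intro ω
        simp only
        by_cases h : Y ω < q
        · rw [Set.indicator_of_mem (show ω ∈ {ω | Y ω < q} from h)]
          have h1 : max (q - Y ω) 0 = q - Y ω := max_eq_left (by linarith)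
          have h2 : c - Y ω ≤ max (c - Y ω) 0 := le_max_left _ _
          rw [h1]; linarith
        · rw [Set.indicator_of_notMem (show ω ∉ {ω | Y ω < q} from h)]
          push_neg at h
          have h1 : max (q - Y ω) 0 = 0 := max_eq_right (by linarith)
          have h2 : (0:ℝ) ≤ max (c - Y ω) 0 := le_max_right _ _
          rw [h1]; simp only [mul_zero, add_zero]; linarith
      have hmono := integral_mono ((hGint q).add hindint) (hGint c) hpt
      simp only [Pi.add_apply] at hmono
      rw [integral_add (hGint q) hindint, integral_const_mul,
        integral_indicator_const (1:ℝ) hms] at hmono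
      have hFq : α * (c - q) ≤ (c - q) * ((volume {ω | Y ω < q}).toReal * 1) := by
        have h1 : (volume {ω | Y ω < q}).toReal ≤ α := hB
        have h2 : (0:ℝ) ≤ (volume {ω | Y ω < q}).toReal := ENNReal.toReal_nonneg
        nlinarith
      simp only [smul_eq_mul, Measure.real] at hmono
      linarith
  -- conclusion
  have e1 : (∫ ω, KBLoss α (X ω - VaR X α)) = ∫ ω, KBLoss α (Y ω - q) := by
    rw [hVaR]
    exact integral_congr_ae (hXY.mono fun ω h => by simp only [h])
  have e2 : (∫ ω, KBLoss α (X ω - c)) = ∫ ω, KBLoss α (Y ω - c) :=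
    integral_congr_ae (hXY.mono fun ω h => by simp only [h])
  rw [e1, e2, hIval q, hIval c]
  have hinv : (0:ℝ) ≤ 1/(1-α) := by positivity
  apply mul_le_mul_of_nonneg_left _ hinv
  linarith
end

section
/- Suppose the asset payoffs Y = (Y₀, Y₁, …, Yₙ) are integrable with Y₀ equal a.s. to a strictly positive constant, let S be an integrable liability and α ∈ (0,1). If ξ ∈ ℝ^{n+1} minimizes β ↦ E[ℓ_α(S − β·Y)] over β ∈ ℝ^{n+1}, then 0 is an α-quantile of the residual S − ξ·Y; that is, P(S − ξ·Y ≤ 0) ≥ α and P(S − ξ·Y < 0) ≤ α. -/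
open MeasureTheory Filter Topology

lemma KBLoss_integrable {Ω : Type*} [MeasureSpace Ω] {α : ℝ} (hα : 0 ≤ α / (1 - α))
    {f : Ω → ℝ} (hf : Integrable f volume) :
    Integrable (fun ω => KBLoss α (f ω)) volume := by
  unfold KBLoss
  exact (hf.pos_part.const_mul _).add hf.neg.pos_part

/-- Pointwise upper bound when shifting down. -/
lemma KBLoss_shift_down (a h x : ℝ) (ha : 0 ≤ a) (hh : 0 < h) :
    (a * max (x - h) 0 + max (-(x - h)) 0) - (a * max x 0 + max (-x) 0)
      ≤ -(a * h) + (a + 1) * h * (if x ≤ h then 1 else 0) := by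
  simp only [max_def]
  split_ifs <;> nlinarith

/-- Pointwise upper bound when shifting up. -/
lemma KBLoss_shift_up (a h x : ℝ) (ha : 0 ≤ a) (hh : 0 < h) :
    (a * max (x + h) 0 + max (-(x + h)) 0) - (a * max x 0 + max (-x) 0)
      ≤ a * h - (a + 1) * h * (if x ≤ -h then 1 else 0) := by
  simp only [max_def]
  split_ifs <;> nlinarith

/-- If the integrable asset payoffs have `Y₀` a.s. equal to a strictly positive
constant and `ξ` minimizes `β ↦ E[ℓ_α(S − β·Y)]`, then `0` is an `α`-quantile of the residual
`S − ξ·Y`: `P(S − ξ·Y ≤ 0) ≥ α` and `P(S − ξ·Y < 0) ≤ α`. -/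
theorem quantile_hedge_residual_quantile_zero
    {Ω : Type*} [MeasureSpace Ω] [IsProbabilityMeasure (volume : Measure Ω)]
    (n : ℕ) (Y : Fin (n + 1) → Ω → ℝ)
    (hY : ∀ i, Integrable (Y i) volume)
    (c : ℝ) (hc : 0 < c) (hY0 : ∀ᵐ ω, Y 0 ω = c)
    (S : Ω → ℝ) (hS : Integrable S volume)
    (α : ℝ) (hα : α ∈ Set.Ioo (0 : ℝ) 1)
    (ξ : Fin (n + 1) → ℝ)
    (hξ : ∀ β : Fin (n + 1) → ℝ,
      (∫ ω, KBLoss α (S ω - ∑ i, ξ i * Y i ω))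
        ≤ ∫ ω, KBLoss α (S ω - ∑ i, β i * Y i ω)) :
    α ≤ (volume {ω | S ω - ∑ i, ξ i * Y i ω ≤ 0}).toReal ∧
    (volume {ω | S ω - ∑ i, ξ i * Y i ω < 0}).toReal ≤ α := by
  obtain ⟨hα0, hα1⟩ := hα
  set a : ℝ := α / (1 - α) with ha_def
  have h1α : (0:ℝ) < 1 - α := by linarith
  have ha : 0 < a := div_pos hα0 h1α
  have haα : α * (a + 1) = a := by
    have h2 : a * (1 - α) = α := by rw [ha_def]; exact div_mul_cancel₀ α h1α.ne'
    linear_combination -h2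
  set Z : Ω → ℝ := fun ω => S ω - ∑ i, ξ i * Y i ω with hZ_def
  have hZint : Integrable Z volume :=
    hS.sub (integrable_finset_sum _ fun i _ => (hY i).const_mul (ξ i))
  -- measurable representative
  set W : Ω → ℝ := hZint.1.mk Z with hW_def
  have hWm : StronglyMeasurable W := hZint.1.stronglyMeasurable_mk
  have hZW : Z =ᵐ[volume] W := hZint.1.ae_eq_mk
  have hWint : Integrable W volume := hZint.congr hZW
  -- for any shift t, the expected loss at residual Z - t is ≥ the minimal one
  have key : ∀ t : ℝ, (∫ ω, KBLoss α (Z ω)) ≤ ∫ ω, KBLoss α (W ω - t) := by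
    intro t
    set β : Fin (n + 1) → ℝ := fun i => ξ i + if i = 0 then t / c else 0 with hβ
    calc (∫ ω, KBLoss α (Z ω)) ≤ ∫ ω, KBLoss α (S ω - ∑ i, β i * Y i ω) := hξ β
      _ = ∫ ω, KBLoss α (W ω - t) := by
          refine integral_congr_ae ?_
          filter_upwards [hY0, hZW] with ω hω hω2
          have : ∑ i, β i * Y i ω = (∑ i, ξ i * Y i ω) + t := by
            simp only [hβ, add_mul, Finset.sum_add_distrib, ite_mul, zero_mul,
              Finset.sum_ite_eq', Finset.mem_univ, if_pos, hω]
            field_simp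
          rw [this]
          have h3 : S ω - ((∑ i, ξ i * Y i ω) + t) = Z ω - t := by
            simp only [hZ_def]; ring
          rw [h3, hω2]
  have hint : ∀ t : ℝ, Integrable (fun ω => KBLoss α (W ω - t)) volume :=
    fun t => KBLoss_integrable ha.le (hWint.sub (integrable_const t))
  have hintZ : Integrable (fun ω => KBLoss α (Z ω)) volume := KBLoss_integrable ha.le hZint
  have hZW0 : (∫ ω, KBLoss α (Z ω)) = ∫ ω, KBLoss α (W ω) := by
    exact integral_congr_ae (hZW.mono fun ω hω => by simp only []; rw [hω])
  -- measurable sets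
  have hmeas : ∀ r : ℝ, MeasurableSet {ω | W ω ≤ r} := fun r =>
    hWm.measurable measurableSet_Iic
  -- Step A : ∀ h > 0, α ≤ P(W ≤ h)
  have stepA : ∀ h : ℝ, 0 < h → α ≤ (volume {ω | W ω ≤ h}).toReal := by
    intro h hh
    have hkey := key h
    rw [hZW0] at hkey
    have hdiff : (∫ ω, (KBLoss α (W ω - h) - KBLoss α (W ω))) ≥ 0 := by
      rw [integral_sub (hint h) (by simpa using hint 0)]
      linarith
    set g : Ω → ℝ := fun ω =>
      -(a * h) + Set.indicator {ω | W ω ≤ h} (fun _ => (a + 1) * h) ω with hg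
    have hgint : Integrable g volume := by
      exact (integrable_const _).add
        ((integrable_const ((a + 1) * h)).indicator (hmeas h))
    have hmono : (∫ ω, (KBLoss α (W ω - h) - KBLoss α (W ω))) ≤ ∫ ω, g ω := by
      refine integral_mono ((hint h).sub (by simpa using hint 0)) hgint ?_
      intro ω
      have := KBLoss_shift_down a h (W ω) ha.le hh
      simp only [hg, KBLoss, Set.indicator, Set.mem_setOf_eq, ← ha_def]
      by_cases hc' : W ω ≤ h <;> simp [hc'] at this ⊢ <;> linarith
    have hgval : (∫ ω, g ω) = -(a * h) + (a + 1) * h * (volume {ω | W ω ≤ h}).toReal := by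
      rw [hg]
      rw [integral_add (integrable_const _)
        ((integrable_const ((a + 1) * h)).indicator (hmeas h))]
      rw [integral_indicator_const _ (hmeas h), integral_const]
      simp [mul_comm, measureReal_def]
    rw [hgval] at hmono
    have hp0 : 0 ≤ -(a * h) + (a + 1) * h * (volume {ω | W ω ≤ h}).toReal := le_trans hdiff hmono
    nlinarith [hp0, haα, mul_pos (by linarith : (0:ℝ) < a + 1) hh]
  -- Step B : ∀ h > 0, P(W ≤ -h) ≤ α
  have stepB : ∀ h : ℝ, 0 < h → (volume {ω | W ω ≤ -h}).toReal ≤ α := by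
    intro h hh
    have hkey := key (-h)
    rw [hZW0] at hkey
    have hintup : Integrable (fun ω => KBLoss α (W ω + h)) volume :=
      KBLoss_integrable ha.le (hWint.add (integrable_const h))
    have hdiff : (∫ ω, (KBLoss α (W ω + h) - KBLoss α (W ω))) ≥ 0 := by
      have heq : (∫ ω, KBLoss α (W ω + h)) = ∫ ω, KBLoss α (W ω - (-h)) := by
        congr 1; funext ω; ring_nf
      rw [integral_sub hintup (by simpa using hint 0), heq]
      linarith
    set g : Ω → ℝ := fun ω =>
      a * h + Set.indicator {ω | W ω ≤ -h} (fun _ => -((a + 1) * h)) ω with hg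
    have hgint : Integrable g volume :=
      (integrable_const _).add ((integrable_const (-((a + 1) * h))).indicator (hmeas (-h)))
    have hmono : (∫ ω, (KBLoss α (W ω + h) - KBLoss α (W ω))) ≤ ∫ ω, g ω := by
      refine integral_mono (hintup.sub (by simpa using hint 0)) hgint ?_
      intro ω
      have := KBLoss_shift_up a h (W ω) ha.le hh
      simp only [hg, KBLoss, Set.indicator, Set.mem_setOf_eq, ← ha_def]
      by_cases hc' : W ω ≤ -h <;> simp [hc'] at this ⊢ <;> linarith
    have hgval : (∫ ω, g ω) = a * h - (a + 1) * h * (volume {ω | W ω ≤ -h}).toReal := by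
      rw [hg]
      rw [integral_add (integrable_const _)
        ((integrable_const (-((a + 1) * h))).indicator (hmeas (-h)))]
      rw [integral_indicator_const _ (hmeas (-h)), integral_const]
      simp [measureReal_def]; ring
    rw [hgval] at hmono
    have hp0 : 0 ≤ a * h - (a + 1) * h * (volume {ω | W ω ≤ -h}).toReal := le_trans hdiff hmono
    nlinarith [hp0, haα, mul_pos (by linarith : (0:ℝ) < a + 1) hh]
  -- limits
  have hfin : ∀ s : Set Ω, volume s ≠ ⊤ := fun s => (measure_lt_top volume s).ne
  have hWle : α ≤ (volume {ω | W ω ≤ 0}).toReal := by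
    have hset : {ω | W ω ≤ 0} = ⋂ k : ℕ, {ω | W ω ≤ 1 / (k + 1)} := by
      ext ω
      simp only [Set.mem_setOf_eq, Set.mem_iInter]
      constructor
      · intro hω k; exact le_trans hω (by positivity)
      · intro hω
        by_contra hcon
        push_neg at hcon
        obtain ⟨k, hk⟩ := exists_nat_one_div_lt hcon
        exact absurd (hω k) (not_le.2 (by exact_mod_cast hk))
    have htend : Tendsto (fun k : ℕ => volume {ω | W ω ≤ 1 / (k + 1)}) atTop
        (𝓝 (volume {ω | W ω ≤ 0})) := by
      rw [hset]
      refine tendsto_measure_iInter_atTop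
        (fun k => (hmeas _).nullMeasurableSet)
        (fun i j hij ω hω => ?_) ⟨0, hfin _⟩
      simp only [Set.mem_setOf_eq] at hω ⊢
      refine hω.trans ?_
      gcongr
    have hev : ∀ k : ℕ, ENNReal.ofReal α ≤ volume {ω | W ω ≤ 1 / (k + 1)} := by
      intro k
      have := stepA (1 / (k + 1)) (by positivity)
      rw [← ENNReal.ofReal_toReal (hfin {ω | W ω ≤ 1 / (k + 1)})]
      exact ENNReal.ofReal_le_ofReal this
    have := ge_of_tendsto' htend hev
    calc α = (ENNReal.ofReal α).toReal := by rw [ENNReal.toReal_ofReal hα0.le]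
      _ ≤ (volume {ω | W ω ≤ 0}).toReal := ENNReal.toReal_mono (hfin _) this
  have hWlt : (volume {ω | W ω < 0}).toReal ≤ α := by
    have hset : {ω | W ω < 0} = ⋃ k : ℕ, {ω | W ω ≤ -(1 / (k + 1))} := by
      ext ω
      simp only [Set.mem_setOf_eq, Set.mem_iUnion]
      constructor
      · intro hω
        obtain ⟨k, hk⟩ := exists_nat_one_div_lt (by linarith : (0:ℝ) < -W ω)
        exact ⟨k, by push_cast at hk ⊢; linarith⟩
      · rintro ⟨k, hk⟩
        have : (0:ℝ) < 1 / (k + 1) := by positivity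
        linarith
    have htend : Tendsto (fun k : ℕ => volume {ω | W ω ≤ -(1 / (k + 1))}) atTop
        (𝓝 (volume {ω | W ω < 0})) := by
      rw [hset]
      refine tendsto_measure_iUnion_atTop (fun i j hij ω hω => ?_)
      simp only [Set.mem_setOf_eq] at hω ⊢
      refine hω.trans (neg_le_neg ?_)
      gcongr
    have hev : ∀ k : ℕ, volume {ω | W ω ≤ -(1 / (k + 1))} ≤ ENNReal.ofReal α := by
      intro k
      have := stepB (1 / (k + 1)) (by positivity)
      rw [← ENNReal.ofReal_toReal (hfin {ω | W ω ≤ -(1 / (k + 1))})]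
      exact ENNReal.ofReal_le_ofReal this
    have hle := le_of_tendsto' htend hev
    calc (volume {ω | W ω < 0}).toReal ≤ (ENNReal.ofReal α).toReal :=
          ENNReal.toReal_mono (by simp) hle
      _ = α := ENNReal.toReal_ofReal hα0.le
  -- transfer back to Z
  have hsle : volume {ω | Z ω ≤ 0} = volume {ω | W ω ≤ 0} :=
    measure_congr (hZW.mono fun ω hω => by
      show (Z ω ≤ 0) = (W ω ≤ 0); rw [hω])
  have hslt : volume {ω | Z ω < 0} = volume {ω | W ω < 0} :=
    measure_congr (hZW.mono fun ω hω => by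
      show (Z ω < 0) = (W ω < 0); rw [hω])
  constructor
  · rw [show {ω | S ω - ∑ i, ξ i * Y i ω ≤ 0} = {ω | Z ω ≤ 0} from rfl, hsle]
    exact hWle
  · rw [show {ω | S ω - ∑ i, ξ i * Y i ω < 0} = {ω | Z ω < 0} from rfl, hslt]
    exact hWlt
end

section
/- Suppose the asset payoffs Y = (Y₀, Y₁, …, Yₙ) are square-integrable and non-redundant, let S be a square-integrable liability, ν ∈ ℝ^{n+1}, and set S^h = ν·Y. Then the (unique) quadratic hedging strategies satisfy θ_{S+S^h} = θ_S + ν, and the residual of S + S^h equals the residual of S: (S + S^h) − θ_{S+S^h}·Y = S − θ_S·Y a.s. Consequently, for α ∈ (0,1), the set of minimizers over β ∈ ℝ^{n+1} of E[ℓ_α((S+S^h) − θ_{S+S^h}·Y − β·Y)] coincides with the set of minimizers of E[ℓ_α(S − θ_S·Y − β·Y)], and for any common choice η of such a minimizer and any price vector y ∈ ℝ^{n+1} and i ∈ (0,1), the mean-quantile valuation satisfies ρ(S + S^h) = ρ(S) + ν·y. -/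
open MeasureTheory

/-- Market-consistency of the mean-quantile valuation. With non-redundant
square-integrable assets, for a hedgeable payoff `S^h = ν·Y`: the quadratic hedging strategies
satisfy `θ_{S+S^h} = θ_S + ν`, the residuals of `S + S^h` and `S` coincide a.s., the sets of
residual quantile-hedging minimizers coincide, and for any common minimizer `η` the
mean-quantile valuation satisfies `ρ(S + S^h) = ρ(S) + ν·y`. -/
theorem mean_quantile_valuation_market_consistent
    {Ω : Type*} [MeasureSpace Ω] [IsProbabilityMeasure (volume : Measure Ω)]
    (n : ℕ) (Y : Fin (n + 1) → Ω → ℝ) (y : Fin (n + 1) → ℝ)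
    (hY : ∀ i, MemLp (Y i) 2 volume)
    (hNR : ∀ β : Fin (n + 1) → ℝ, (∀ᵐ ω, ∑ i, β i * Y i ω = 0) → β = 0)
    (S : Ω → ℝ) (hS : MemLp S 2 volume)
    (ν : Fin (n + 1) → ℝ)
    (α : ℝ) (hα : α ∈ Set.Ioo (0 : ℝ) 1)
    (coc : ℝ) (hcoc : coc ∈ Set.Ioo (0 : ℝ) 1)
    (θS θSh : Fin (n + 1) → ℝ)
    (hθS : ∀ β : Fin (n + 1) → ℝ,
      (∫ ω, (S ω - ∑ i, θS i * Y i ω) ^ 2) ≤ ∫ ω, (S ω - ∑ i, β i * Y i ω) ^ 2)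
    (hθSh : ∀ β : Fin (n + 1) → ℝ,
      (∫ ω, (S ω + ∑ i, ν i * Y i ω - ∑ i, θSh i * Y i ω) ^ 2)
        ≤ ∫ ω, (S ω + ∑ i, ν i * Y i ω - ∑ i, β i * Y i ω) ^ 2) :
    θSh = θS + ν ∧
    (∀ᵐ ω, S ω + ∑ i, ν i * Y i ω - ∑ i, θSh i * Y i ω = S ω - ∑ i, θS i * Y i ω) ∧
    {η : Fin (n + 1) → ℝ |
        ∀ β : Fin (n + 1) → ℝ,
          (∫ ω, KBLoss α (S ω + ∑ i, ν i * Y i ω - ∑ i, θSh i * Y i ω - ∑ i, η i * Y i ω))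
            ≤ ∫ ω, KBLoss α (S ω + ∑ i, ν i * Y i ω - ∑ i, θSh i * Y i ω - ∑ i, β i * Y i ω)}
      = {η : Fin (n + 1) → ℝ |
          ∀ β : Fin (n + 1) → ℝ,
            (∫ ω, KBLoss α (S ω - ∑ i, θS i * Y i ω - ∑ i, η i * Y i ω))
              ≤ ∫ ω, KBLoss α (S ω - ∑ i, θS i * Y i ω - ∑ i, β i * Y i ω)} ∧
    (∀ η : Fin (n + 1) → ℝ,
      (∀ β : Fin (n + 1) → ℝ,
        (∫ ω, KBLoss α (S ω - ∑ i, θS i * Y i ω - ∑ i, η i * Y i ω))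
          ≤ ∫ ω, KBLoss α (S ω - ∑ i, θS i * Y i ω - ∑ i, β i * Y i ω)) →
      (∑ i, θSh i * y i) + coc * ∑ i, η i * y i
        = ((∑ i, θS i * y i) + coc * ∑ i, η i * y i) + ∑ i, ν i * y i) := by
  -- basic sum manipulation lemmas
  have sum_add : ∀ (p q : Fin (n + 1) → ℝ) (ω : Ω),
      ∑ i, (p i + q i) * Y i ω = (∑ i, p i * Y i ω) + ∑ i, q i * Y i ω := by
    intro p q ω
    rw [← Finset.sum_add_distrib]
    exact Finset.sum_congr rfl fun i _ => by ring
  have sum_sub : ∀ (p q : Fin (n + 1) → ℝ) (ω : Ω),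
      ∑ i, (p i - q i) * Y i ω = (∑ i, p i * Y i ω) - ∑ i, q i * Y i ω := by
    intro p q ω
    rw [← Finset.sum_sub_distrib]
    exact Finset.sum_congr rfl fun i _ => by ring
  have sum_half : ∀ (p q : Fin (n + 1) → ℝ) (ω : Ω),
      ∑ i, ((p i + q i) / 2) * Y i ω = ((∑ i, p i * Y i ω) + ∑ i, q i * Y i ω) / 2 := by
    intro p q ω
    rw [← sum_add p q ω, Finset.sum_div]
    exact Finset.sum_congr rfl fun i _ => by ring
  -- integrability
  have hL : ∀ β : Fin (n + 1) → ℝ, MemLp (fun ω => ∑ i, β i * Y i ω) 2 volume := by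
    intro β
    exact memLp_finset_sum Finset.univ (fun i _ => (hY i).const_mul (β i))
  have hResid : ∀ β : Fin (n + 1) → ℝ,
      MemLp (fun ω => S ω - ∑ i, β i * Y i ω) 2 volume := fun β => hS.sub (hL β)
  have hIntSq : ∀ β : Fin (n + 1) → ℝ,
      Integrable (fun ω => (S ω - ∑ i, β i * Y i ω) ^ 2) volume := fun β =>
    (hResid β).integrable_sq
  set F : (Fin (n + 1) → ℝ) → ℝ := fun β => ∫ ω, (S ω - ∑ i, β i * Y i ω) ^ 2 with hF
  set b : Fin (n + 1) → ℝ := fun i => θSh i - ν i with hb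
  -- b minimizes F
  have hbmin : ∀ β : Fin (n + 1) → ℝ, F b ≤ F β := by
    intro β
    have h := hθSh (fun i => β i + ν i)
    have e1 : (fun ω => (S ω + ∑ i, ν i * Y i ω - ∑ i, θSh i * Y i ω) ^ 2)
        = fun ω => (S ω - ∑ i, b i * Y i ω) ^ 2 := by
      funext ω; rw [sum_sub θSh ν ω]; ring
    have e2 : (fun ω => (S ω + ∑ i, ν i * Y i ω - ∑ i, (β i + ν i) * Y i ω) ^ 2)
        = fun ω => (S ω - ∑ i, β i * Y i ω) ^ 2 := by
      funext ω; rw [sum_add β ν ω]; ring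
    simpa only [hF, e1, e2] using h
  -- F b = F θS, midpoint argument
  have hc := hθS (fun i => (θS i + b i) / 2)
  have hbc := hbmin (fun i => (θS i + b i) / 2)
  -- key pointwise identity
  have key : ∀ ω : Ω, (∑ i, (b i - θS i) * Y i ω) ^ 2 / 2
      = (S ω - ∑ i, θS i * Y i ω) ^ 2 + (S ω - ∑ i, b i * Y i ω) ^ 2
        - 2 * (S ω - ∑ i, ((θS i + b i) / 2) * Y i ω) ^ 2 := by
    intro ω
    rw [sum_sub b θS ω, sum_half θS b ω]
    ring
  have hint : ∫ ω, (∑ i, (b i - θS i) * Y i ω) ^ 2 / 2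
      = F θS + F b - 2 * F (fun i => (θS i + b i) / 2) := by
    have : (fun ω => (∑ i, (b i - θS i) * Y i ω) ^ 2 / 2)
        = fun ω => (S ω - ∑ i, θS i * Y i ω) ^ 2 + (S ω - ∑ i, b i * Y i ω) ^ 2
          - 2 * (S ω - ∑ i, ((θS i + b i) / 2) * Y i ω) ^ 2 := funext key
    have hI1 : Integrable (fun ω => (S ω - ∑ i, θS i * Y i ω) ^ 2
        + (S ω - ∑ i, b i * Y i ω) ^ 2) volume := (hIntSq θS).add (hIntSq b)
    have hI2 : Integrable (fun ω => 2 * (S ω - ∑ i, ((θS i + b i) / 2) * Y i ω) ^ 2) volume :=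
      (hIntSq _).const_mul 2
    rw [this, integral_sub hI1 hI2, integral_add (hIntSq θS) (hIntSq b), integral_const_mul]
  have hle0 : ∫ ω, (∑ i, (b i - θS i) * Y i ω) ^ 2 / 2 ≤ 0 := by
    rw [hint]; linarith
  have hzero : (fun ω => (∑ i, (b i - θS i) * Y i ω) ^ 2 / 2) =ᵐ[volume] 0 := by
    have hintg : Integrable (fun ω => (∑ i, (b i - θS i) * Y i ω) ^ 2 / 2) volume :=
      ((hL (fun i => b i - θS i)).integrable_sq).div_const 2
    have hnn : 0 ≤ fun ω => (∑ i, (b i - θS i) * Y i ω) ^ 2 / 2 := fun ω => by positivity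
    have heq : ∫ ω, (∑ i, (b i - θS i) * Y i ω) ^ 2 / 2 = 0 :=
      le_antisymm hle0 (integral_nonneg hnn)
    exact (integral_eq_zero_iff_of_nonneg hnn hintg).mp heq
  have hae : ∀ᵐ ω, ∑ i, (b i - θS i) * Y i ω = 0 := by
    filter_upwards [hzero] with ω hω
    have : (∑ i, (b i - θS i) * Y i ω) ^ 2 / 2 = 0 := hω
    nlinarith [sq_nonneg (∑ i, (b i - θS i) * Y i ω)]
  have hba : (fun i => b i - θS i) = 0 := hNR _ hae
  have hθ : θSh = θS + ν := by
    funext i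
    have := congrFun hba i
    simp only [hb, Pi.zero_apply] at this
    have : θSh i - ν i - θS i = 0 := this
    simp only [Pi.add_apply]
    linarith
  refine ⟨hθ, ?_, ?_, ?_⟩
  · filter_upwards with ω
    rw [hθ]; simp only [Pi.add_apply]; rw [sum_add θS ν ω]; ring
  · have hfun : ∀ (β : Fin (n + 1) → ℝ) (ω : Ω),
        S ω + ∑ i, ν i * Y i ω - ∑ i, θSh i * Y i ω - ∑ i, β i * Y i ω
          = S ω - ∑ i, θS i * Y i ω - ∑ i, β i * Y i ω := by
      intro β ω
      rw [hθ]; simp only [Pi.add_apply]; rw [sum_add θS ν ω]; ring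
    ext η
    constructor <;> intro h β <;> [skip; skip] <;>
      · have := h β
        simp only [hfun] at this ⊢
        exact this
  · intro η _
    have : ∑ i, θSh i * y i = (∑ i, θS i * y i) + ∑ i, ν i * y i := by
      rw [hθ, ← Finset.sum_add_distrib]
      exact Finset.sum_congr rfl fun i _ => by simp [Pi.add_apply]; ring
    rw [this]; ring
end

section
/- Suppose the asset payoffs Y = (Y₀, Y₁, …, Yₙ) are integrable with Y₀ = e^r a.s. for a constant r ≥ 0, let α ∈ (0,1), and let X be an integrable random variable independent of the random vector (Y₁, …, Yₙ). Then the strategy η = (e^{−r}·VaR_α(X), 0, …, 0), which invests only in the risk-free asset, minimizes β ↦ E[ℓ_α(X − β·Y)] over β ∈ ℝ^{n+1}. -/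
open MeasureTheory
open scoped ENNReal Classical

set_option linter.unusedSectionVars false
set_option linter.unusedVariables false

section Aux

lemma kb_subgrad {a : ℝ} (ha : 0 ≤ a) (u t : ℝ) :
    a * max u 0 + max (-u) 0 - max t 0 * (if u ≤ 0 then (-1:ℝ) else a)
      + max (-t) 0 * (if u < 0 then (-1:ℝ) else a)
    ≤ a * max (u - t) 0 + max (-(u - t)) 0 := by
  have h1 : a * (u - t) ≤ a * max (u - t) 0 + max (-(u-t)) 0 := by
    rcases le_total (u - t) 0 with h | h
    · have : a * (u - t) ≤ 0 := mul_nonpos_of_nonneg_of_nonpos ha h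
      rw [max_eq_right h, max_eq_left (neg_nonneg.2 h)]; linarith
    · simp [max_eq_left h, max_eq_right (neg_nonpos.2 h)]
  have h2 : -(u - t) ≤ a * max (u - t) 0 + max (-(u-t)) 0 := by
    have := le_max_left (-(u-t)) 0
    nlinarith [le_max_left (u-t) (0:ℝ), le_max_right (u-t) (0:ℝ), mul_nonneg ha (le_max_right (u-t) (0:ℝ))]
  rcases le_total t 0 with ht | ht
  · rw [max_eq_right ht, max_eq_left (neg_nonneg.2 ht)]
    rcases lt_or_ge u 0 with hu | hu
    · rw [if_pos hu]
      have : max u 0 = 0 := max_eq_right hu.le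
      rw [this]
      have : max (-u) 0 = -u := max_eq_left (neg_nonneg.2 hu.le)
      rw [this]
      linarith [h2]
    · rw [if_neg (not_lt.2 hu)]
      rcases eq_or_lt_of_le hu with rfl | hu'
      · simp at *; nlinarith [h1]
      · have : max u 0 = u := max_eq_left hu'.le
        rw [this, max_eq_right (neg_nonpos.2 hu'.le)]
        nlinarith [h1]
  · rw [max_eq_left ht, max_eq_right (neg_nonpos.2 ht)]
    rcases le_or_gt u 0 with hu | hu
    · rw [if_pos hu, max_eq_right hu, max_eq_left (neg_nonneg.2 hu)]
      have hut : u - t ≤ 0 := by linarith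
      rw [max_eq_right hut, max_eq_left (neg_nonneg.2 hut)]
      ring_nf
      nlinarith
    · rw [if_neg (not_le.2 hu), max_eq_left hu.le, max_eq_right (neg_nonpos.2 hu.le)]
      nlinarith [h1]

variable {Ω : Type*} [MeasureSpace Ω] [IsProbabilityMeasure (volume : Measure Ω)]

lemma cdf_mono {X : Ω → ℝ} {x y : ℝ} (h : x ≤ y) :
    volume {ω | X ω ≤ x} ≤ volume {ω | X ω ≤ y} :=
  measure_mono fun ω (hω : X ω ≤ x) => le_trans hω h

lemma VaR_set_nonempty {X : Ω → ℝ} {α : ℝ} (hα : α < 1) :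
    {x : ℝ | α ≤ (volume {ω | X ω ≤ x}).toReal}.Nonempty := by
  by_contra h
  rw [Set.not_nonempty_iff_eq_empty] at h
  have hlt : ∀ x : ℝ, (volume {ω | X ω ≤ x}).toReal < α := by
    intro x
    by_contra hx
    have hxm : x ∈ {x : ℝ | α ≤ (volume {ω | X ω ≤ x}).toReal} := not_lt.1 hx
    rw [h] at hxm; exact hxm
  have hU : (⋃ k : ℕ, {ω | X ω ≤ (k:ℝ)}) = Set.univ := by
    ext ω; simp only [Set.mem_iUnion, Set.mem_univ, iff_true, Set.mem_setOf_eq]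
    obtain ⟨k, hk⟩ := exists_nat_ge (X ω)
    exact ⟨k, hk⟩
  have hm : Monotone fun k : ℕ => {ω | X ω ≤ (k:ℝ)} := by
    intro i j hij ω (hω : X ω ≤ i)
    exact le_trans hω (by exact_mod_cast hij)
  have := hm.measure_iUnion (μ := volume)
  rw [hU, measure_univ] at this
  have hle : (⨆ k : ℕ, (volume {ω | X ω ≤ (k:ℝ)} : ENNReal)) ≤ ENNReal.ofReal α := by
    refine iSup_le fun k => ?_
    have hk := (hlt k).le
    have hfin : volume {ω | X ω ≤ (k:ℝ)} ≠ ⊤ := measure_ne_top _ _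
    rw [← ENNReal.ofReal_toReal hfin]
    exact ENNReal.ofReal_le_ofReal hk
  rw [← this] at hle
  have : (1:ℝ≥0∞) < 1 := lt_of_le_of_lt hle (by
    have : ENNReal.ofReal α < ENNReal.ofReal 1 := by
      exact ENNReal.ofReal_lt_ofReal_iff (by norm_num) |>.2 hα
    simpa using this)
  exact absurd this (lt_irrefl _)

lemma VaR_set_bddBelow {X : Ω → ℝ} (hX : Measurable X) {α : ℝ} (hα : 0 < α) :
    BddBelow {x : ℝ | α ≤ (volume {ω | X ω ≤ x}).toReal} := by
  have hI : (⋂ k : ℕ, {ω | X ω ≤ -(k:ℝ)}) = ∅ := by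
    ext ω; simp only [Set.mem_iInter, Set.mem_empty_iff_false, iff_false, not_forall,
      Set.mem_setOf_eq, not_le]
    obtain ⟨k, hk⟩ := exists_nat_gt (-(X ω))
    exact ⟨k, by linarith⟩
  have hanti : Antitone fun k : ℕ => {ω | X ω ≤ -(k:ℝ)} := by
    intro i j hij ω (hω : X ω ≤ -(j:ℝ))
    refine le_trans hω (by simp; exact_mod_cast hij)
  have hiInf := hanti.measure_iInter (μ := volume)
    (fun k => (hX measurableSet_Iic).nullMeasurableSet) ⟨0, measure_ne_top _ _⟩
  rw [hI, measure_empty] at hiInf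
  have : ∃ k : ℕ, volume {ω | X ω ≤ -(k:ℝ)} < ENNReal.ofReal α := by
    by_contra hcon
    push_neg at hcon
    have : ENNReal.ofReal α ≤ ⨅ k : ℕ, volume {ω | X ω ≤ -(k:ℝ)} := le_iInf hcon
    rw [← hiInf] at this
    simp only [nonpos_iff_eq_zero, ENNReal.ofReal_eq_zero] at this
    linarith
  obtain ⟨k, hk⟩ := this
  refine ⟨-(k:ℝ), fun s hs => ?_⟩
  by_contra hks
  push_neg at hks
  have h1 : volume {ω | X ω ≤ s} ≤ volume {ω | X ω ≤ -(k:ℝ)} := cdf_mono hks.le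
  have h2 : α ≤ (volume {ω | X ω ≤ s}).toReal := hs
  have h3 : (volume {ω | X ω ≤ -(k:ℝ)}).toReal < α :=
    ENNReal.toReal_lt_of_lt_ofReal hk
  have h4 : (volume {ω | X ω ≤ s}).toReal ≤ (volume {ω | X ω ≤ -(k:ℝ)}).toReal :=
    ENNReal.toReal_mono (measure_ne_top _ _) h1
  linarith

lemma alpha_le_cdf_VaR {X : Ω → ℝ} (hX : Measurable X) {α : ℝ} (hα : α ∈ Set.Ioo (0:ℝ) 1) :
    α ≤ (volume {ω | X ω ≤ VaR X α}).toReal := by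
  set S := {x : ℝ | α ≤ (volume {ω | X ω ≤ x}).toReal} with hS
  have hne := VaR_set_nonempty (X := X) hα.2
  have hbdd := VaR_set_bddBelow hX hα.1
  set q := VaR X α with hq
  have hqs : q = sInf S := rfl
  have hseteq : (⋂ n : ℕ, {ω | X ω ≤ q + 1/(n+1)}) = {ω | X ω ≤ q} := by
    ext ω
    simp only [Set.mem_iInter, Set.mem_setOf_eq]
    constructor
    · intro h
      by_contra hc
      push_neg at hc
      obtain ⟨n, hn⟩ := exists_nat_one_div_lt (sub_pos.2 hc)
      have := h n
      linarith [hn]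
    · intro h n
      have : (0:ℝ) < 1/(n+1) := by positivity
      linarith
  have hanti : Antitone fun n : ℕ => {ω | X ω ≤ q + 1/(n+1)} := by
    intro i j hij ω (hω : X ω ≤ q + 1/(j+1))
    have : (1:ℝ)/(j+1) ≤ 1/(i+1) := by
      apply one_div_le_one_div_of_le (by positivity)
      exact_mod_cast Nat.add_le_add_right hij 1
    simp only [Set.mem_setOf_eq]; linarith
  have hiInf := hanti.measure_iInter (μ := volume)
    (fun n => (hX measurableSet_Iic).nullMeasurableSet) ⟨0, measure_ne_top _ _⟩
  rw [hseteq] at hiInf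
  have hge : ∀ n : ℕ, ENNReal.ofReal α ≤ volume {ω | X ω ≤ q + 1/(n+1)} := by
    intro n
    have hlt : sInf S < q + 1/(n+1) := by
      rw [← hqs]
      have h0 : (0:ℝ) < 1/(n+1:ℝ) := by positivity
      linarith
    obtain ⟨s, hsS, hs⟩ := (csInf_lt_iff hbdd hne).1 hlt
    have h1 : volume {ω | X ω ≤ s} ≤ volume {ω | X ω ≤ q + 1/(n+1)} := cdf_mono hs.le
    have h2 : ENNReal.ofReal α ≤ volume {ω | X ω ≤ s} := by
      rw [ENNReal.ofReal_le_iff_le_toReal (measure_ne_top _ _)]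
      exact hsS
    exact le_trans h2 h1
  have : ENNReal.ofReal α ≤ volume {ω | X ω ≤ q} := by
    rw [hiInf]; exact le_iInf hge
  rwa [ENNReal.ofReal_le_iff_le_toReal (measure_ne_top _ _)] at this

lemma cdf_lt_VaR_le_alpha {X : Ω → ℝ} (hX : Measurable X) {α : ℝ} (hα : α ∈ Set.Ioo (0:ℝ) 1) :
    (volume {ω | X ω < VaR X α}).toReal ≤ α := by
  set S := {x : ℝ | α ≤ (volume {ω | X ω ≤ x}).toReal} with hS
  have hne := VaR_set_nonempty (X := X) hα.2
  have hbdd := VaR_set_bddBelow hX hα.1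
  set q := VaR X α with hq
  have hqs : q = sInf S := rfl
  have hseteq : (⋃ n : ℕ, {ω | X ω ≤ q - 1/(n+1)}) = {ω | X ω < q} := by
    ext ω
    simp only [Set.mem_iUnion, Set.mem_setOf_eq]
    constructor
    · rintro ⟨n, hn⟩
      have : (0:ℝ) < 1/(n+1) := by positivity
      linarith
    · intro h
      obtain ⟨n, hn⟩ := exists_nat_one_div_lt (sub_pos.2 h)
      exact ⟨n, by linarith⟩
  have hmono : Monotone fun n : ℕ => {ω | X ω ≤ q - 1/(n+1)} := by
    intro i j hij ω (hω : X ω ≤ q - 1/(i+1))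
    have : (1:ℝ)/(j+1) ≤ 1/(i+1) := by
      apply one_div_le_one_div_of_le (by positivity)
      exact_mod_cast Nat.add_le_add_right hij 1
    simp only [Set.mem_setOf_eq]; linarith
  have hiSup := hmono.measure_iUnion (μ := volume)
  rw [hseteq] at hiSup
  have hle : ∀ n : ℕ, volume {ω | X ω ≤ q - 1/(n+1)} ≤ ENNReal.ofReal α := by
    intro n
    have hnot : q - 1/(n+1) ∉ S := by
      apply notMem_of_lt_csInf _ hbdd
      rw [← hqs]
      have h0 : (0:ℝ) < 1/(n+1:ℝ) := by positivity
      linarith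
    have : (volume {ω | X ω ≤ q - 1/(n+1)}).toReal < α := not_le.1 hnot
    exact ENNReal.le_ofReal_iff_toReal_le (measure_ne_top _ _) hα.1.le |>.2 this.le
  have : volume {ω | X ω < q} ≤ ENNReal.ofReal α := by
    rw [hiSup]; exact iSup_le hle
  exact ENNReal.toReal_le_of_le_ofReal hα.1.le this

lemma integral_ite_mem {A : Set Ω} (hA : MeasurableSet A) (b d : ℝ) :
    ∫ ω, (if ω ∈ A then b else d) = d + (b - d) * (volume A).toReal := by
  have heq : (fun ω => if ω ∈ A then b else d)
      = fun ω => d + (b - d) * A.indicator (fun _ => (1:ℝ)) ω := by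
    funext ω
    by_cases h : ω ∈ A
    · simp [h]
    · simp [h]
  rw [heq]
  rw [integral_add (integrable_const d)
    (((integrable_const (1:ℝ)).indicator hA).const_mul _)]
  rw [MeasureTheory.integral_const_mul, integral_indicator_const (1:ℝ) hA]
  simp [mul_comm, measureReal_def]

lemma kb_integrable {α : ℝ} (hα : α ∈ Set.Ioo (0:ℝ) 1) {f : Ω → ℝ}
    (hf : Integrable f volume) :
    Integrable (fun ω => α / (1 - α) * max (f ω) 0 + max (-f ω) 0) volume :=
  (hf.pos_part.const_mul _).add hf.neg_part

end Aux

/-- If `Y₀ = e^r` a.s. (with `r ≥ 0`) and the integrable random variable `X` is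
independent of `(Y₁, …, Yₙ)`, then the strategy investing only `e^{−r}·VaR_α(X)` in the
risk-free asset minimizes `β ↦ E[ℓ_α(X − β·Y)]`. -/
theorem riskfree_quantile_hedge_of_indep
    {Ω : Type*} [MeasureSpace Ω] [IsProbabilityMeasure (volume : Measure Ω)]
    (n : ℕ) (Y : Fin (n + 1) → Ω → ℝ)
    (hY : ∀ i, Integrable (Y i) volume)
    (r : ℝ) (hr : 0 ≤ r) (hY0 : ∀ᵐ ω, Y 0 ω = Real.exp r)
    (α : ℝ) (hα : α ∈ Set.Ioo (0 : ℝ) 1)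
    (X : Ω → ℝ) (hX : Integrable X volume)
    (hIndep : ProbabilityTheory.IndepFun X (fun ω (i : Fin n) => Y i.succ ω) volume)
    (η : Fin (n + 1) → ℝ)
    (hηdef : η = fun i => if i = 0 then Real.exp (-r) * VaR X α else 0) :
    ∀ β : Fin (n + 1) → ℝ,
      (∫ ω, KBLoss α (X ω - ∑ i, η i * Y i ω))
        ≤ ∫ ω, KBLoss α (X ω - ∑ i, β i * Y i ω) := by
  intro β
  obtain ⟨hα0, hα1⟩ := hα
  simp only [KBLoss]
  set a : ℝ := α / (1 - α) with ha_def
  have h1α : (0:ℝ) < 1 - α := by linarith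
  have ha : 0 ≤ a := div_nonneg hα0.le h1α.le
  have haa : a * (1 - α) = α := div_mul_cancel₀ _ h1α.ne'
  -- measurable version of X
  have hXm := hX.aestronglyMeasurable
  set X' : Ω → ℝ := hXm.mk X with hX'def
  have hXX' : X =ᵐ[volume] X' := hXm.ae_eq_mk
  have hX'meas : Measurable X' := hXm.stronglyMeasurable_mk.measurable
  have hX'int : Integrable X' volume := hX.congr hXX'
  -- VaR equality
  have hsets : ∀ x : ℝ, volume {ω | X ω ≤ x} = volume {ω | X' ω ≤ x} := by
    intro x
    apply measure_congr
    rw [Filter.eventuallyEq_set]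
    filter_upwards [hXX'] with ω h
    simp [h]
  have hVaR : VaR X α = VaR X' α := by
    unfold VaR
    congr 1
    ext x
    simp only [Set.mem_setOf_eq]
    rw [hsets x]
  set q : ℝ := VaR X α with hq_def
  have hp : α ≤ (volume {ω | X' ω ≤ q}).toReal := by
    rw [hVaR]; exact alpha_le_cdf_VaR hX'meas ⟨hα0, hα1⟩
  have hp' : (volume {ω | X' ω < q}).toReal ≤ α := by
    rw [hVaR]; exact cdf_lt_VaR_le_alpha hX'meas ⟨hα0, hα1⟩
  set c : ℝ := β 0 * Real.exp r with hc_def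
  set T : Ω → ℝ := fun ω => c + (∑ i : Fin n, β i.succ * Y i.succ ω) - q with hT_def
  set sp : ℝ → ℝ := fun x => if x ≤ q then (-1:ℝ) else a with hsp_def
  set sm : ℝ → ℝ := fun x => if x < q then (-1:ℝ) else a with hsm_def
  -- sums
  have hetaY : ∀ᵐ ω, X ω - ∑ i, η i * Y i ω = X' ω - q := by
    filter_upwards [hY0, hXX'] with ω h0 hx
    have hsum : ∑ i, η i * Y i ω = q := by
      rw [hηdef, Fin.sum_univ_succ]
      simp only [Fin.succ_ne_zero, if_false, zero_mul, Finset.sum_const_zero, add_zero,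
        if_pos rfl]
      rw [h0, Real.exp_neg]
      have hexp : Real.exp r ≠ 0 := (Real.exp_pos r).ne'
      field_simp
      rw [if_pos trivial]; field_simp
    rw [hsum, hx]
  have hbetaY : ∀ᵐ ω, X ω - ∑ i, β i * Y i ω = X' ω - q - T ω := by
    filter_upwards [hY0, hXX'] with ω h0 hx
    rw [hx, Fin.sum_univ_succ, h0, hT_def, hc_def]
    ring
  -- integrabilities
  have hTint : Integrable T volume := by
    have hZint : Integrable (fun ω => ∑ i : Fin n, β i.succ * Y i.succ ω) volume :=
      integrable_finset_sum _ fun i _ => (hY i.succ).const_mul _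
    exact ((integrable_const c).add hZint).sub (integrable_const q)
  have hsp_meas : Measurable sp :=
    Measurable.ite measurableSet_Iic measurable_const measurable_const
  have hsm_meas : Measurable sm :=
    Measurable.ite measurableSet_Iio measurable_const measurable_const
  have hsp_bdd : ∀ x, ‖sp x‖ ≤ max 1 a := by
    intro x
    by_cases h : x ≤ q
    · simp only [hsp_def, if_pos h]
      rw [norm_neg, norm_one]
      exact le_max_left 1 a
    · simp only [hsp_def, if_neg h]
      rw [Real.norm_eq_abs, abs_of_nonneg ha]
      exact le_max_right 1 a
  have hsm_bdd : ∀ x, ‖sm x‖ ≤ max 1 a := by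
    intro x
    by_cases h : x < q
    · simp only [hsm_def, if_pos h]
      rw [norm_neg, norm_one]
      exact le_max_left 1 a
    · simp only [hsm_def, if_neg h]
      rw [Real.norm_eq_abs, abs_of_nonneg ha]
      exact le_max_right 1 a
  have hspX_meas : AEStronglyMeasurable (fun ω => sp (X' ω)) volume :=
    (hsp_meas.comp hX'meas).aestronglyMeasurable
  have hsmX_meas : AEStronglyMeasurable (fun ω => sm (X' ω)) volume :=
    (hsm_meas.comp hX'meas).aestronglyMeasurable
  have hspX_int : Integrable (fun ω => sp (X' ω)) volume :=
    Integrable.mono' (integrable_const (max 1 a)) hspX_meas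
      (Filter.Eventually.of_forall fun ω => hsp_bdd (X' ω))
  have hsmX_int : Integrable (fun ω => sm (X' ω)) volume :=
    Integrable.mono' (integrable_const (max 1 a)) hsmX_meas
      (Filter.Eventually.of_forall fun ω => hsm_bdd (X' ω))
  have h3 : Integrable (fun ω => sp (X' ω) * max (T ω) 0) volume :=
    hTint.pos_part.bdd_mul hspX_meas (Filter.Eventually.of_forall fun ω => hsp_bdd (X' ω))
  have h4 : Integrable (fun ω => sm (X' ω) * max (-T ω) 0) volume :=
    hTint.neg_part.bdd_mul hsmX_meas (Filter.Eventually.of_forall fun ω => hsm_bdd (X' ω))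
  have hintF : Integrable (fun ω => a * max (X' ω - q) 0 + max (-(X' ω - q)) 0) volume :=
    kb_integrable ⟨hα0, hα1⟩ (hX'int.sub (integrable_const q))
  have hintG : Integrable (fun ω => a * max (X' ω - q - T ω) 0 + max (-(X' ω - q - T ω)) 0)
      volume := kb_integrable ⟨hα0, hα1⟩ ((hX'int.sub (integrable_const q)).sub hTint)
  -- independence
  have hW : ProbabilityTheory.IndepFun X' (fun ω (i : Fin n) => Y i.succ ω) volume :=
    hIndep.congr hXX' (Filter.EventuallyEq.refl _ _)
  have hψp : Measurable (fun v : Fin n → ℝ => max (c + (∑ i : Fin n, β i.succ * v i) - q) 0) :=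
    (((measurable_const.add (Finset.measurable_sum _ fun i _ =>
      (measurable_pi_apply i).const_mul _)).sub measurable_const).max measurable_const)
  have hψm : Measurable (fun v : Fin n → ℝ =>
      max (-(c + (∑ i : Fin n, β i.succ * v i) - q)) 0) :=
    ((((measurable_const.add (Finset.measurable_sum _ fun i _ =>
      (measurable_pi_apply i).const_mul _)).sub measurable_const).neg).max measurable_const)
  have hIndep1 : ProbabilityTheory.IndepFun (fun ω => sp (X' ω)) (fun ω => max (T ω) 0)
      volume := hW.comp hsp_meas hψp
  have hIndep2 : ProbabilityTheory.IndepFun (fun ω => sm (X' ω)) (fun ω => max (-T ω) 0)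
      volume := hW.comp hsm_meas hψm
  have hmul1 : ∫ ω, sp (X' ω) * max (T ω) 0
      = (∫ ω, sp (X' ω)) * ∫ ω, max (T ω) 0 :=
    hIndep1.integral_fun_mul_eq_mul_integral hspX_int.aestronglyMeasurable hTint.pos_part.aestronglyMeasurable
  have hmul2 : ∫ ω, sm (X' ω) * max (-T ω) 0
      = (∫ ω, sm (X' ω)) * ∫ ω, max (-T ω) 0 :=
    hIndep2.integral_fun_mul_eq_mul_integral hsmX_int.aestronglyMeasurable hTint.neg_part.aestronglyMeasurable
  -- signs
  have hintsp : ∫ ω, sp (X' ω) ≤ 0 := by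
    have hAB : (fun ω => sp (X' ω))
        = fun ω => if ω ∈ {ω | X' ω ≤ q} then (-1:ℝ) else a := rfl
    have hA : MeasurableSet {ω | X' ω ≤ q} := hX'meas measurableSet_Iic
    rw [hAB, integral_ite_mem hA (-1) a]
    nlinarith [mul_nonneg (show (0:ℝ) ≤ 1 + a by linarith)
      (show (0:ℝ) ≤ (volume {ω | X' ω ≤ q}).toReal - α by linarith)]
  have hintsm : 0 ≤ ∫ ω, sm (X' ω) := by
    have hAB : (fun ω => sm (X' ω))
        = fun ω => if ω ∈ {ω | X' ω < q} then (-1:ℝ) else a := rfl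
    have hA : MeasurableSet {ω | X' ω < q} := hX'meas measurableSet_Iio
    rw [hAB, integral_ite_mem hA (-1) a]
    nlinarith [mul_nonneg (show (0:ℝ) ≤ 1 + a by linarith)
      (show (0:ℝ) ≤ α - (volume {ω | X' ω < q}).toReal by linarith)]
  have hTp_nonneg : 0 ≤ ∫ ω, max (T ω) 0 :=
    integral_nonneg fun ω => le_max_right _ _
  have hTm_nonneg : 0 ≤ ∫ ω, max (-T ω) 0 :=
    integral_nonneg fun ω => le_max_right _ _
  -- pointwise inequality
  have hpt : ∀ ω, a * max (X' ω - q) 0 + max (-(X' ω - q)) 0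
        - sp (X' ω) * max (T ω) 0 + sm (X' ω) * max (-T ω) 0
      ≤ a * max (X' ω - q - T ω) 0 + max (-(X' ω - q - T ω)) 0 := by
    intro ω
    have h := kb_subgrad ha (X' ω - q) (T ω)
    have e1 : (if X' ω - q ≤ 0 then (-1:ℝ) else a) = sp (X' ω) := by
      simp only [hsp_def, sub_nonpos]
    have e2 : (if X' ω - q < 0 then (-1:ℝ) else a) = sm (X' ω) := by
      simp only [hsm_def, sub_neg]
    rw [e1, e2, mul_comm (max (T ω) 0), mul_comm (max (-T ω) 0)] at h
    exact h
  have hintLHS : Integrable (fun ω => a * max (X' ω - q) 0 + max (-(X' ω - q)) 0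
      - sp (X' ω) * max (T ω) 0 + sm (X' ω) * max (-T ω) 0) volume :=
    (hintF.sub h3).add h4
  have hmono : ∫ ω, (a * max (X' ω - q) 0 + max (-(X' ω - q)) 0
        - sp (X' ω) * max (T ω) 0 + sm (X' ω) * max (-T ω) 0)
      ≤ ∫ ω, (a * max (X' ω - q - T ω) 0 + max (-(X' ω - q - T ω)) 0) :=
    integral_mono hintLHS hintG hpt
  have hsplit : ∫ ω, (a * max (X' ω - q) 0 + max (-(X' ω - q)) 0
        - sp (X' ω) * max (T ω) 0 + sm (X' ω) * max (-T ω) 0)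
      = (∫ ω, (a * max (X' ω - q) 0 + max (-(X' ω - q)) 0))
        - (∫ ω, sp (X' ω) * max (T ω) 0) + ∫ ω, sm (X' ω) * max (-T ω) 0 := by
    have hFG : Integrable (fun ω => a * max (X' ω - q) 0 + max (-(X' ω - q)) 0
        - sp (X' ω) * max (T ω) 0) volume := hintF.sub h3
    rw [integral_add hFG h4, integral_sub hintF h3]
  calc ∫ ω, (a * max (X ω - ∑ i, η i * Y i ω) 0 + max (-(X ω - ∑ i, η i * Y i ω)) 0)
      = ∫ ω, (a * max (X' ω - q) 0 + max (-(X' ω - q)) 0) := by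
        apply integral_congr_ae
        filter_upwards [hetaY] with ω h
        rw [h]
    _ ≤ (∫ ω, (a * max (X' ω - q) 0 + max (-(X' ω - q)) 0))
        - (∫ ω, sp (X' ω) * max (T ω) 0) + ∫ ω, sm (X' ω) * max (-T ω) 0 := by
        rw [hmul1, hmul2]
        have k1 : (∫ ω, sp (X' ω)) * (∫ ω, max (T ω) 0) ≤ 0 :=
          mul_nonpos_of_nonpos_of_nonneg hintsp hTp_nonneg
        have k2 : 0 ≤ (∫ ω, sm (X' ω)) * ∫ ω, max (-T ω) 0 :=
          mul_nonneg hintsm hTm_nonneg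
        linarith
    _ = ∫ ω, (a * max (X' ω - q) 0 + max (-(X' ω - q)) 0
        - sp (X' ω) * max (T ω) 0 + sm (X' ω) * max (-T ω) 0) := hsplit.symm
    _ ≤ ∫ ω, (a * max (X' ω - q - T ω) 0 + max (-(X' ω - q - T ω)) 0) := hmono
    _ = ∫ ω, (a * max (X ω - ∑ i, β i * Y i ω) 0 + max (-(X ω - ∑ i, β i * Y i ω)) 0) := by
        apply integral_congr_ae
        filter_upwards [hbetaY] with ω h
        rw [h]
end

section
/- Suppose the asset payoffs Y = (Y₀, Y₁, …, Yₙ) are square-integrable and non-redundant with Y₀ = e^r a.s. for a constant r ≥ 0 and time-0 prices y = (1, y₁, …, yₙ), let α ∈ (0,1) and i ∈ (0,1), and let S⊥ be a square-integrable liability independent of (Y₁, …, Yₙ). Then the strategy θ = (e^{−r}·E[S⊥], 0, …, 0) is the quadratic hedging strategy of S⊥, the strategy η = (e^{−r}·VaR_α(S⊥ − E[S⊥]), 0, …, 0) is a minimizer over β ∈ ℝ^{n+1} of E[ℓ_α(S⊥ − θ·Y − β·Y)], and the resulting mean-quantile valuation equals ρ(S⊥) = e^{−r}·E[S⊥] +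 e^{−r}·i·VaR_α(S⊥ − E[S⊥]). -/
open MeasureTheory

open ProbabilityTheory Filter

section Aux

variable {Ω : Type*} [MeasureSpace Ω] [IsProbabilityMeasure (volume : Measure Ω)]

lemma VaR_props {X : Ω → ℝ} (hX : Measurable X) {α : ℝ} (hα0 : 0 < α) (hα1 : α < 1) :
    α ≤ (volume {ω | X ω ≤ VaR X α}).toReal ∧
      (volume {ω | X ω < VaR X α}).toReal ≤ α := by
  set S : Set ℝ := {x | α ≤ (volume {ω | X ω ≤ x}).toReal} with hS
  have hmono : ∀ {a b : ℝ}, a ≤ b → a ∈ S → b ∈ S := by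
    intro a b hab ha
    simp only [hS, Set.mem_setOf_eq] at ha ⊢
    refine ha.trans ?_
    refine (ENNReal.toReal_le_toReal (measure_ne_top _ _) (measure_ne_top _ _)).2
      (measure_mono fun ω hω => ?_)
    simp only [Set.mem_setOf_eq] at hω ⊢
    linarith
  have hne : S.Nonempty := by
    have hU : (⋃ n : ℕ, {ω | X ω ≤ (n : ℝ)}) = Set.univ := by
      ext ω
      simp only [Set.mem_iUnion, Set.mem_setOf_eq, Set.mem_univ, iff_true]
      exact exists_nat_ge (X ω)
    have hmon : Monotone fun n : ℕ => {ω | X ω ≤ (n : ℝ)} := by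
      intro a b hab ω hω
      simp only [Set.mem_setOf_eq] at hω ⊢
      exact hω.trans (Nat.cast_le.2 hab)
    have h1 : Tendsto (fun n : ℕ => volume {ω | X ω ≤ (n : ℝ)}) atTop (nhds 1) := by
      have h := tendsto_measure_iUnion_atTop (μ := (volume : Measure Ω))
        (s := fun n : ℕ => {ω | X ω ≤ (n : ℝ)}) hmon
      rw [hU, measure_univ] at h
      exact h
    have h2 : Tendsto (fun n : ℕ => (volume {ω | X ω ≤ (n : ℝ)}).toReal) atTop (nhds 1) := by
      have := (ENNReal.tendsto_toReal (a := 1) (by simp)).comp h1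
      exact this
    obtain ⟨n, hn⟩ := (h2.eventually_const_lt hα1).exists
    exact ⟨n, le_of_lt hn⟩
  have hbdd : BddBelow S := by
    have hI : (⋂ n : ℕ, {ω | X ω ≤ -(n : ℝ)}) = (∅ : Set Ω) := by
      ext ω
      simp only [Set.mem_iInter, Set.mem_setOf_eq, Set.mem_empty_iff_false, iff_false, not_forall]
      obtain ⟨n, hn⟩ := exists_nat_gt (-X ω)
      exact ⟨n, by push_neg; linarith⟩
    have hant : Antitone fun n : ℕ => {ω | X ω ≤ -(n : ℝ)} := by
      intro a b hab ω hω
      simp only [Set.mem_setOf_eq] at hω ⊢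
      have : (a : ℝ) ≤ b := Nat.cast_le.2 hab
      linarith
    have h1 : Tendsto (fun n : ℕ => volume {ω | X ω ≤ -(n : ℝ)}) atTop (nhds 0) := by
      have h := tendsto_measure_iInter_atTop (μ := (volume : Measure Ω))
        (s := fun n : ℕ => {ω | X ω ≤ -(n : ℝ)})
        (fun n => (hX measurableSet_Iic).nullMeasurableSet) hant ⟨0, measure_ne_top _ _⟩
      rw [hI, measure_empty] at h
      exact h
    have h2 : Tendsto (fun n : ℕ => (volume {ω | X ω ≤ -(n : ℝ)}).toReal) atTop (nhds 0) := by
      have := (ENNReal.tendsto_toReal (a := 0) (by simp)).comp h1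
      exact this
    obtain ⟨n, hn⟩ := (h2.eventually_lt_const hα0).exists
    refine ⟨-(n : ℝ), fun x hx => ?_⟩
    by_contra hlt
    push_neg at hlt
    exact absurd (hmono (le_of_lt hlt) hx) (by simp only [hS, Set.mem_setOf_eq]; push_neg; exact hn)
  have hq : VaR X α = sInf S := rfl
  constructor
  · have hmem : ∀ k : ℕ, sInf S + 1 / (k + 1) ∈ S := by
      intro k
      have hpos : (0 : ℝ) < 1 / (k + 1) := by positivity
      obtain ⟨a, haS, ha⟩ := exists_lt_of_csInf_lt hne (lt_add_of_pos_right _ hpos)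
      exact hmono (le_of_lt ha) haS
    have hIeq : {ω | X ω ≤ sInf S} = ⋂ k : ℕ, {ω | X ω ≤ sInf S + 1 / (k + 1)} := by
      ext ω
      simp only [Set.mem_iInter, Set.mem_setOf_eq]
      constructor
      · intro h k
        have : (0:ℝ) < 1 / (k+1) := by positivity
        linarith
      · intro h
        by_contra hlt
        push_neg at hlt
        obtain ⟨k, hk⟩ := exists_nat_one_div_lt (show (0:ℝ) < X ω - sInf S by linarith)
        have := h k
        linarith
    have hant : Antitone fun k : ℕ => {ω | X ω ≤ sInf S + 1 / (k + 1)} := by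
      intro a b hab ω hω
      simp only [Set.mem_setOf_eq] at hω ⊢
      have : (1 : ℝ) / (b + 1) ≤ 1 / (a + 1) := by
        apply one_div_le_one_div_of_le (by positivity)
        have : (a : ℝ) ≤ b := Nat.cast_le.2 hab
        linarith
      linarith
    have h1 : Tendsto (fun k : ℕ => volume {ω | X ω ≤ sInf S + 1 / (k + 1)}) atTop
        (nhds (volume {ω | X ω ≤ sInf S})) := by
      have h := tendsto_measure_iInter_atTop (μ := (volume : Measure Ω))
        (s := fun k : ℕ => {ω | X ω ≤ sInf S + 1 / (k + 1)})
        (fun k => (hX measurableSet_Iic).nullMeasurableSet) hant ⟨0, measure_ne_top _ _⟩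
      rw [← hIeq] at h
      exact h
    have h2 := (ENNReal.tendsto_toReal (measure_ne_top _ _)).comp h1
    rw [hq]
    exact ge_of_tendsto' h2 fun k => hmem k
  · have hnotmem : ∀ k : ℕ, ¬ (sInf S - 1 / (k + 1) ∈ S) := by
      intro k hk
      have := csInf_le hbdd hk
      have hpos : (0 : ℝ) < 1 / (k + 1) := by positivity
      linarith
    have hUeq : {ω | X ω < sInf S} = ⋃ k : ℕ, {ω | X ω ≤ sInf S - 1 / (k + 1)} := by
      ext ω
      simp only [Set.mem_iUnion, Set.mem_setOf_eq]
      constructor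
      · intro h
        obtain ⟨k, hk⟩ := exists_nat_one_div_lt (show (0:ℝ) < sInf S - X ω by linarith)
        exact ⟨k, by linarith⟩
      · rintro ⟨k, hk⟩
        have hpos : (0 : ℝ) < 1 / (k + 1) := by positivity
        linarith
    have hmon : Monotone fun k : ℕ => {ω | X ω ≤ sInf S - 1 / (k + 1)} := by
      intro a b hab ω hω
      simp only [Set.mem_setOf_eq] at hω ⊢
      have : (1 : ℝ) / (b + 1) ≤ 1 / (a + 1) := by
        apply one_div_le_one_div_of_le (by positivity)
        have : (a : ℝ) ≤ b := Nat.cast_le.2 hab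
        linarith
      linarith
    have h1 : Tendsto (fun k : ℕ => volume {ω | X ω ≤ sInf S - 1 / (k + 1)}) atTop
        (nhds (volume {ω | X ω < sInf S})) := by
      have h := tendsto_measure_iUnion_atTop (μ := (volume : Measure Ω))
        (s := fun k : ℕ => {ω | X ω ≤ sInf S - 1 / (k + 1)}) hmon
      rw [← hUeq] at h
      exact h
    have h2 := (ENNReal.tendsto_toReal (measure_ne_top _ _)).comp h1
    rw [hq]
    refine le_of_tendsto' h2 fun k => ?_
    have := hnotmem k
    simp only [hS, Set.mem_setOf_eq] at this
    push_neg at this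
    exact le_of_lt this

end Aux
lemma kb_subgrad_s13 {α : ℝ} (hα0 : 0 < α) (hα1 : α < 1) {x q z s : ℝ}
    (hs : (x ≤ q ∧ s = 1) ∨ (q ≤ x ∧ s = -(α / (1 - α)))) :
    KBLoss α (x - q) + (z - q) * s ≤ KBLoss α (x - z) := by
  have hτ : 0 < α / (1 - α) := div_pos hα0 (by linarith)
  unfold KBLoss
  rcases hs with ⟨hxq, rfl⟩ | ⟨hxq, rfl⟩
  · rw [max_eq_right (by linarith : x - q ≤ 0), max_eq_left (by linarith : (0:ℝ) ≤ -(x - q))]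
    rcases le_total z x with h | h
    · rw [max_eq_left (by linarith : (0:ℝ) ≤ x - z), max_eq_right (by linarith : -(x - z) ≤ 0)]
      nlinarith [mul_nonneg hτ.le (sub_nonneg.2 h)]
    · rw [max_eq_right (by linarith : x - z ≤ 0), max_eq_left (by linarith : (0:ℝ) ≤ -(x - z))]
      nlinarith
  · rw [max_eq_left (by linarith : (0:ℝ) ≤ x - q), max_eq_right (by linarith : -(x - q) ≤ 0)]
    rcases le_total z x with h | h
    · rw [max_eq_left (by linarith : (0:ℝ) ≤ x - z), max_eq_right (by linarith : -(x - z) ≤ 0)]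
      nlinarith
    · rw [max_eq_right (by linarith : x - z ≤ 0), max_eq_left (by linarith : (0:ℝ) ≤ -(x - z))]
      nlinarith [mul_nonneg hτ.le (sub_nonneg.2 h)]

lemma kb_abs_le {α : ℝ} (hα0 : 0 < α) (hα1 : α < 1) (u : ℝ) :
    |KBLoss α u| ≤ (α / (1 - α) + 1) * |u| := by
  have hτ : 0 < α / (1 - α) := div_pos hα0 (by linarith)
  unfold KBLoss
  rcases le_total u 0 with h | h
  · rw [max_eq_right h, max_eq_left (by linarith : (0:ℝ) ≤ -u), abs_of_nonneg (by linarith),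
      abs_of_nonpos h]
    nlinarith
  · rw [max_eq_left h, max_eq_right (by linarith : -u ≤ 0), abs_of_nonneg (by positivity),
      abs_of_nonneg h]
    nlinarith

lemma kb_continuous (α : ℝ) : Continuous fun u : ℝ => KBLoss α u := by
  unfold KBLoss
  fun_prop

lemma s_integral {Ω : Type*} [MeasureSpace Ω] [IsProbabilityMeasure (volume : Measure Ω)]
    {p : ℝ → Prop} [DecidablePred p] (hA : MeasurableSet {t : ℝ | p t})
    {f : Ω → ℝ} (hf : Measurable f) (τ : ℝ) :
    ∫ ω, (if p (f ω) then (1:ℝ) else -τ)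
      = (1 + τ) * (volume {ω | p (f ω)}).toReal - τ := by
  have hms : MeasurableSet {ω | p (f ω)} := hf hA
  have heq : (fun ω => if p (f ω) then (1:ℝ) else -τ)
      = fun ω => Set.indicator {ω | p (f ω)} (fun _ => 1 + τ) ω - τ := by
    funext ω
    by_cases h : p (f ω)
    · simp only [Set.indicator, Set.mem_setOf_eq, h, if_true]; ring
    · simp only [Set.indicator, Set.mem_setOf_eq, h, if_false]; ring
  rw [heq, integral_sub ((integrable_const (1 + τ)).indicator hms) (integrable_const τ),
    integral_indicator_const _ hms, integral_const]
  simp [measure_univ, smul_eq_mul]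
  simp only [measureReal_def]
  ring

lemma part2_core {Ω : Type*} [MeasureSpace Ω] [IsProbabilityMeasure (volume : Measure Ω)]
    {α τ q c : ℝ} (hα0 : 0 < α) (hα1 : α < 1) (hτ : τ = α / (1 - α))
    {X W s : Ω → ℝ}
    (hXint : Integrable X volume)
    (hWint : Integrable W volume)
    (hs_meas : AEStronglyMeasurable s volume)
    (hs_bdd : ∀ ω, |s ω| ≤ max 1 τ)
    (hsub : ∀ᵐ ω, ∀ z : ℝ, KBLoss α (X ω - q) + (z - q) * s ω ≤ KBLoss α (X ω - z))
    (hIndep_sW : ProbabilityTheory.IndepFun s W volume)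
    (hsign : 0 ≤ (c + (∫ ω, W ω) - q) * ∫ ω, s ω) :
    ∫ ω, KBLoss α (X ω - q) ≤ ∫ ω, KBLoss α (X ω - (c + W ω)) := by
  have hτ0 : 0 < τ := hτ ▸ div_pos hα0 (by linarith)
  have hf1_int : Integrable (fun ω => KBLoss α (X ω - q)) volume := by
    refine Integrable.mono' (((hXint.sub (integrable_const q)).abs).const_mul (τ + 1))
      ((kb_continuous α).comp_aestronglyMeasurable
        ((hXint.1).sub aestronglyMeasurable_const)) ?_
    filter_upwards with ω
    rw [Real.norm_eq_abs]
    simp only [Pi.sub_apply]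
    calc |KBLoss α (X ω - q)| ≤ (α / (1 - α) + 1) * |X ω - q| := kb_abs_le hα0 hα1 _
    _ = (τ + 1) * |X ω - q| := by rw [hτ]
  have hXW_int : Integrable (fun ω => X ω - (c + W ω)) volume :=
    hXint.sub ((integrable_const c).add hWint)
  have hf3_int : Integrable (fun ω => KBLoss α (X ω - (c + W ω))) volume := by
    refine Integrable.mono' ((hXW_int.abs).const_mul (τ + 1))
      ((kb_continuous α).comp_aestronglyMeasurable hXW_int.1) ?_
    filter_upwards with ω
    rw [Real.norm_eq_abs]
    calc |KBLoss α (X ω - (c + W ω))| ≤ (α / (1 - α) + 1) * |X ω - (c + W ω)| :=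
      kb_abs_le hα0 hα1 _
    _ = (τ + 1) * |X ω - (c + W ω)| := by rw [hτ]
  have hs_int : Integrable s volume := by
    refine Integrable.mono' (integrable_const (max 1 τ)) hs_meas ?_
    filter_upwards with ω
    rw [Real.norm_eq_abs]
    exact hs_bdd ω
  have hf2_int : Integrable (fun ω => (c + W ω - q) * s ω) volume := by
    have := Integrable.bdd_mul (μ := (volume : Measure Ω))
      (f := s) (g := fun ω => c + W ω - q)
      (((integrable_const c).add hWint).sub (integrable_const q)) hs_meas
      (ae_of_all _ fun ω => by rw [Real.norm_eq_abs]; exact hs_bdd ω)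
    refine this.congr ?_
    filter_upwards with ω
    ring
  have hmono : ∫ ω, (KBLoss α (X ω - q) + (c + W ω - q) * s ω)
      ≤ ∫ ω, KBLoss α (X ω - (c + W ω)) := by
    refine integral_mono_ae (hf1_int.add hf2_int) hf3_int ?_
    filter_upwards [hsub] with ω h
    exact h (c + W ω)
  rw [integral_add hf1_int hf2_int] at hmono
  have hf2_val : ∫ ω, (c + W ω - q) * s ω = (c + (∫ ω, W ω) - q) * ∫ ω, s ω := by
    have h1 : (fun ω => (c + W ω - q) * s ω) = fun ω => (c - q) * s ω + W ω * s ω := by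
      funext ω; ring
    have hWs_int : Integrable (fun ω => W ω * s ω) volume := by
      have := Integrable.bdd_mul (μ := (volume : Measure Ω)) (f := s) (g := W)
        hWint hs_meas (ae_of_all _ fun ω => by rw [Real.norm_eq_abs]; exact hs_bdd ω)
      refine this.congr ?_
      filter_upwards with ω
      ring
    rw [h1, integral_add ((hs_int.const_mul _)) hWs_int, integral_const_mul]
    have hprod : ∫ ω, W ω * s ω = (∫ ω, W ω) * ∫ ω, s ω :=
      hIndep_sW.symm.integral_mul_eq_mul_integral hWint.1 hs_meas
    rw [hprod]
    ring
  rw [hf2_val] at hmono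
  linarith

/-- The mean-quantile valuation is actuarial: for a square-integrable liability
`S⊥` independent of `(Y₁, …, Yₙ)`, the quadratic hedging strategy is
`θ = (e^{−r}·E[S⊥], 0, …, 0)`, the residual quantile-hedging strategy
`η = (e^{−r}·VaR_α(S⊥ − E[S⊥]), 0, …, 0)` is a minimizer of the residual Koenker–Bassett
error, and the mean-quantile valuation is the cost-of-capital premium
`ρ(S⊥) = e^{−r}·E[S⊥] + e^{−r}·i·VaR_α(S⊥ − E[S⊥])`. -/
theorem mean_quantile_valuation_actuarial
    {Ω : Type*} [MeasureSpace Ω] [IsProbabilityMeasure (volume : Measure Ω)]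
    (n : ℕ) (Y : Fin (n + 1) → Ω → ℝ) (y : Fin (n + 1) → ℝ)
    (hY : ∀ i, MemLp (Y i) 2 volume)
    (hNR : ∀ β : Fin (n + 1) → ℝ, (∀ᵐ ω, ∑ i, β i * Y i ω = 0) → β = 0)
    (r : ℝ) (hr : 0 ≤ r) (hY0 : ∀ᵐ ω, Y 0 ω = Real.exp r) (hy0 : y 0 = 1)
    (α : ℝ) (hα : α ∈ Set.Ioo (0 : ℝ) 1)
    (coc : ℝ) (hcoc : coc ∈ Set.Ioo (0 : ℝ) 1)
    (Sp : Ω → ℝ) (hSp : MemLp Sp 2 volume)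
    (hIndep : ProbabilityTheory.IndepFun Sp (fun ω (i : Fin n) => Y i.succ ω) volume)
    (θ η : Fin (n + 1) → ℝ)
    (hθdef : θ = fun i => if i = 0 then Real.exp (-r) * ∫ ω, Sp ω else 0)
    (hηdef : η = fun i => if i = 0 then
        Real.exp (-r) * VaR (fun ω => Sp ω - ∫ ω', Sp ω') α else 0) :
    (∀ β : Fin (n + 1) → ℝ,
      (∫ ω, (Sp ω - ∑ i, θ i * Y i ω) ^ 2) ≤ ∫ ω, (Sp ω - ∑ i, β i * Y i ω) ^ 2) ∧
    (∀ β : Fin (n + 1) → ℝ,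
      (∫ ω, KBLoss α (Sp ω - ∑ i, θ i * Y i ω - ∑ i, η i * Y i ω))
        ≤ ∫ ω, KBLoss α (Sp ω - ∑ i, θ i * Y i ω - ∑ i, β i * Y i ω)) ∧
    (∑ i, θ i * y i) + coc * ∑ i, η i * y i
      = Real.exp (-r) * (∫ ω, Sp ω)
        + Real.exp (-r) * coc * VaR (fun ω => Sp ω - ∫ ω', Sp ω') α := by
  obtain ⟨hα0, hα1⟩ := hα
  have hexp : Real.exp (-r) * Real.exp r = 1 := by
    rw [← Real.exp_add]; simp
  have hτ0 : 0 < α / (1 - α) := div_pos hα0 (by linarith)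
  set μS := ∫ ω, Sp ω with hμSdef
  set q := VaR (fun ω => Sp ω - μS) α with hqdef
  -- measurable representative
  have hSsm := hSp.aestronglyMeasurable
  set Sm := hSsm.mk Sp with hSmdef
  have hSmm : Measurable Sm := hSsm.stronglyMeasurable_mk.measurable
  have hae : Sp =ᵐ[volume] Sm := hSsm.ae_eq_mk
  have hms : ∀ x : ℝ, volume {ω | Sp ω - μS ≤ x} = volume {ω | Sm ω - μS ≤ x} := by
    intro x
    refine measure_congr ?_
    filter_upwards [hae] with ω h
    show (Sp ω - μS ≤ x) = (Sm ω - μS ≤ x)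
    rw [h]
  have hVaReq : q = VaR (fun ω => Sm ω - μS) α := by
    rw [hqdef]
    unfold VaR
    congr 1
    ext x
    simp only [Set.mem_setOf_eq, hms x]
  obtain ⟨hq1, hq2⟩ := VaR_props (X := fun ω => Sm ω - μS) (hSmm.sub measurable_const) hα0 hα1
  rw [← hVaReq] at hq1 hq2
  -- integrability
  have hSpInt : Integrable Sp volume := hSp.integrable one_le_two
  have hYInt : ∀ i, Integrable (Y i) volume := fun i => (hY i).integrable one_le_two
  have hXInt : Integrable (fun ω => Sp ω - μS) volume := hSpInt.sub (integrable_const μS)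
  have hX2 : MemLp (fun ω => Sp ω - μS) 2 volume := hSp.sub (memLp_const μS)
  have hintX : (∫ ω, (Sp ω - μS)) = 0 := by
    rw [integral_sub hSpInt (integrable_const μS), integral_const]
    simp [measure_univ]
    exact sub_self _
  -- sums of θ, η strategies
  have hθsum : ∀ᵐ ω, ∑ i, θ i * Y i ω = μS := by
    filter_upwards [hY0] with ω h
    rw [hθdef, Fin.sum_univ_succ]
    simp only [Fin.succ_ne_zero, if_false, if_true, eq_self_iff_true, zero_mul,
      Finset.sum_const_zero, add_zero, h]
    linear_combination μS * hexp
  have hηsum : ∀ᵐ ω, ∑ i, η i * Y i ω = q := by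
    filter_upwards [hY0] with ω h
    rw [hηdef, Fin.sum_univ_succ]
    simp only [Fin.succ_ne_zero, if_false, if_true, eq_self_iff_true, zero_mul,
      Finset.sum_const_zero, add_zero, h]
    linear_combination q * hexp
  -- β decomposition pieces
  have hsumMeas : ∀ β : Fin (n + 1) → ℝ,
      Measurable fun v : Fin n → ℝ => ∑ j : Fin n, β j.succ * v j := fun β =>
    Finset.measurable_sum _ fun j _ => (measurable_pi_apply j).const_mul _
  have hWInt : ∀ β : Fin (n + 1) → ℝ,
      Integrable (fun ω => ∑ j : Fin n, β j.succ * Y j.succ ω) volume := fun β =>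
    integrable_finset_sum _ fun j _ => (hYInt j.succ).const_mul _
  have hW2 : ∀ β : Fin (n + 1) → ℝ,
      MemLp (fun ω => ∑ j : Fin n, β j.succ * Y j.succ ω) 2 volume := fun β =>
    memLp_finset_sum _ fun j _ => (hY j.succ).const_mul _
  have hZdecomp : ∀ β : Fin (n + 1) → ℝ, ∀ᵐ ω,
      ∑ i, β i * Y i ω = β 0 * Real.exp r + ∑ j : Fin n, β j.succ * Y j.succ ω := by
    intro β
    filter_upwards [hY0] with ω h
    rw [Fin.sum_univ_succ, h]
  have hIndepXW : ∀ β : Fin (n + 1) → ℝ, ProbabilityTheory.IndepFun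
      (fun ω => Sp ω - μS) (fun ω => ∑ j : Fin n, β j.succ * Y j.succ ω) volume := by
    intro β
    exact hIndep.comp (φ := fun t => t - μS) (measurable_id.sub measurable_const) (hsumMeas β)
  refine ⟨?_, ?_, ?_⟩
  · -- Part 1: quadratic hedging
    intro β
    have hZ2 : MemLp (fun ω => ∑ i, β i * Y i ω) 2 volume :=
      memLp_finset_sum _ fun i _ => (hY i).const_mul _
    have hV2 : MemLp (fun ω => μS - ∑ i, β i * Y i ω) 2 volume := (memLp_const μS).sub hZ2
    have hXsq : Integrable (fun ω => (Sp ω - μS) ^ 2) volume := by exact hX2.integrable_sq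
    have hVsq : Integrable (fun ω => (μS - ∑ i, β i * Y i ω) ^ 2) volume := by
      exact hV2.integrable_sq
    have hXV : Integrable (fun ω => (Sp ω - μS) * (μS - ∑ i, β i * Y i ω)) volume := by
      have h := MemLp.smul (p := 2) (q := 2) (r := 1) hV2 hX2
      exact memLp_one_iff_integrable.mp h
    have hXW : Integrable (fun ω => (Sp ω - μS) * ∑ j : Fin n, β j.succ * Y j.succ ω)
        volume := by
      have h := MemLp.smul (p := 2) (q := 2) (r := 1) (hW2 β) hX2
      exact memLp_one_iff_integrable.mp h
    have hcross : ∫ ω, (Sp ω - μS) * (μS - ∑ i, β i * Y i ω) = 0 := by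
      have hc : ∀ᵐ ω, (Sp ω - μS) * (μS - ∑ i, β i * Y i ω)
          = (μS - β 0 * Real.exp r) * (Sp ω - μS)
            - (Sp ω - μS) * ∑ j : Fin n, β j.succ * Y j.succ ω := by
        filter_upwards [hZdecomp β] with ω h
        rw [h]; ring
      rw [integral_congr_ae hc, integral_sub (hXInt.const_mul _) hXW]
      have h1 : ∫ ω, (μS - β 0 * Real.exp r) * (Sp ω - μS)
          = (μS - β 0 * Real.exp r) * ∫ ω, (Sp ω - μS) := by
        exact integral_const_mul _ _
      have h2 : ∫ ω, (Sp ω - μS) * ∑ j : Fin n, β j.succ * Y j.succ ω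
          = (∫ ω, (Sp ω - μS)) * ∫ ω, ∑ j : Fin n, β j.succ * Y j.succ ω := by
        exact (hIndepXW β).integral_mul_eq_mul_integral hXInt.1 (hWInt β).1
      rw [h1, h2, hintX]
      ring
    have hLHS : ∫ ω, (Sp ω - ∑ i, θ i * Y i ω) ^ 2 = ∫ ω, (Sp ω - μS) ^ 2 := by
      refine integral_congr_ae ?_
      filter_upwards [hθsum] with ω h
      rw [h]
    have h2' : Integrable (fun ω => 2 * ((Sp ω - μS) * (μS - ∑ i, β i * Y i ω))) volume := by
      exact hXV.const_mul 2
    have h23 : Integrable (fun ω => 2 * ((Sp ω - μS) * (μS - ∑ i, β i * Y i ω))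
        + (μS - ∑ i, β i * Y i ω) ^ 2) volume := by
      exact h2'.add hVsq
    have hRHS : ∫ ω, (Sp ω - ∑ i, β i * Y i ω) ^ 2
        = (∫ ω, (Sp ω - μS) ^ 2) + ((∫ ω, 2 * ((Sp ω - μS) * (μS - ∑ i, β i * Y i ω)))
          + ∫ ω, (μS - ∑ i, β i * Y i ω) ^ 2) := by
      have e1 : ∫ ω, (Sp ω - ∑ i, β i * Y i ω) ^ 2
          = ∫ ω, ((Sp ω - μS) ^ 2 + (2 * ((Sp ω - μS) * (μS - ∑ i, β i * Y i ω))
            + (μS - ∑ i, β i * Y i ω) ^ 2)) := by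
        congr 1
        funext ω
        ring
      rw [e1, integral_add hXsq h23, integral_add h2' hVsq]
    have h2c : ∫ ω, 2 * ((Sp ω - μS) * (μS - ∑ i, β i * Y i ω)) = 0 := by
      rw [integral_const_mul, hcross]; ring
    have hVnn : 0 ≤ ∫ ω, (μS - ∑ i, β i * Y i ω) ^ 2 :=
      integral_nonneg fun ω => sq_nonneg _
    rw [hLHS, hRHS, h2c]
    linarith
  · -- Part 2: quantile hedging
    intro β
    have hLHS : (∫ ω, KBLoss α (Sp ω - ∑ i, θ i * Y i ω - ∑ i, η i * Y i ω))
        = ∫ ω, KBLoss α ((Sp ω - μS) - q) := by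
      refine integral_congr_ae ?_
      filter_upwards [hθsum, hηsum] with ω h1 h2
      rw [h1, h2]
    have hRHS : (∫ ω, KBLoss α (Sp ω - ∑ i, θ i * Y i ω - ∑ i, β i * Y i ω))
        = ∫ ω, KBLoss α ((Sp ω - μS)
            - (β 0 * Real.exp r + ∑ j : Fin n, β j.succ * Y j.succ ω)) := by
      refine integral_congr_ae ?_
      filter_upwards [hθsum, hZdecomp β] with ω h1 h2
      rw [h1, h2]
    rw [hLHS, hRHS]
    by_cases hm : q ≤ β 0 * Real.exp r + ∫ ω, ∑ j : Fin n, β j.succ * Y j.succ ω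
    · refine part2_core hα0 hα1 rfl hXInt (hWInt β)
        (s := fun ω => if Sm ω - μS ≤ q then (1:ℝ) else -(α / (1 - α))) ?_ ?_ ?_ ?_ ?_
      · exact (Measurable.ite (measurableSet_le (hSmm.sub measurable_const) measurable_const)
          measurable_const measurable_const).aestronglyMeasurable
      · intro ω
        show |(if Sm ω - μS ≤ q then (1:ℝ) else -(α / (1 - α)))| ≤ max 1 (α / (1 - α))
        by_cases h : Sm ω - μS ≤ q
        · rw [if_pos h]
          simpa using le_max_left (1:ℝ) (α / (1 - α))
        · rw [if_neg h, abs_neg, abs_of_pos hτ0]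
          exact le_max_right _ _
      · filter_upwards [hae] with ω h
        intro z
        refine kb_subgrad_s13 hα0 hα1 ?_
        by_cases hc : Sm ω - μS ≤ q
        · exact Or.inl ⟨by rw [h]; exact hc, if_pos hc⟩
        · exact Or.inr ⟨by rw [h]; push_neg at hc; linarith, if_neg hc⟩
      · exact hIndep.congr hae (Filter.EventuallyEq.refl _ _) |>.comp
          (φ := fun t => if t - μS ≤ q then (1:ℝ) else -(α / (1 - α)))
          (Measurable.ite (measurableSet_le (measurable_id.sub measurable_const)
            measurable_const) measurable_const measurable_const) (hsumMeas β)
      · have hInt : (∫ ω, (if Sm ω - μS ≤ q then (1:ℝ) else -(α / (1 - α))))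
            = (1 + α / (1 - α)) * (volume {ω | Sm ω - μS ≤ q}).toReal - α / (1 - α) := by
          exact s_integral (p := fun t => t - μS ≤ q)
            (measurableSet_le (measurable_id.sub measurable_const) measurable_const)
            hSmm (α / (1 - α))
        refine mul_nonneg (by linarith) ?_
        rw [hInt]
        have hτα : (1 - α) * (α / (1 - α)) = α := by
          rw [mul_comm]
          exact div_mul_cancel₀ α (ne_of_gt (by linarith : (0:ℝ) < 1 - α))
        nlinarith [hq1, ENNReal.toReal_nonneg (a := volume {ω | Sm ω - μS ≤ q})]
    · push_neg at hm
      refine part2_core hα0 hα1 rfl hXInt (hWInt β)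
        (s := fun ω => if Sm ω - μS < q then (1:ℝ) else -(α / (1 - α))) ?_ ?_ ?_ ?_ ?_
      · exact (Measurable.ite (measurableSet_lt (hSmm.sub measurable_const) measurable_const)
          measurable_const measurable_const).aestronglyMeasurable
      · intro ω
        show |(if Sm ω - μS < q then (1:ℝ) else -(α / (1 - α)))| ≤ max 1 (α / (1 - α))
        by_cases h : Sm ω - μS < q
        · rw [if_pos h]
          simpa using le_max_left (1:ℝ) (α / (1 - α))
        · rw [if_neg h, abs_neg, abs_of_pos hτ0]
          exact le_max_right _ _
      · filter_upwards [hae] with ω h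
        intro z
        refine kb_subgrad_s13 hα0 hα1 ?_
        by_cases hc : Sm ω - μS < q
        · exact Or.inl ⟨by rw [h]; linarith, if_pos hc⟩
        · exact Or.inr ⟨by rw [h]; push_neg at hc; linarith, if_neg hc⟩
      · exact hIndep.congr hae (Filter.EventuallyEq.refl _ _) |>.comp
          (φ := fun t => if t - μS < q then (1:ℝ) else -(α / (1 - α)))
          (Measurable.ite (measurableSet_lt (measurable_id.sub measurable_const)
            measurable_const) measurable_const measurable_const) (hsumMeas β)
      · have hInt : (∫ ω, (if Sm ω - μS < q then (1:ℝ) else -(α / (1 - α))))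
            = (1 + α / (1 - α)) * (volume {ω | Sm ω - μS < q}).toReal - α / (1 - α) := by
          exact s_integral (p := fun t => t - μS < q)
            (measurableSet_lt (measurable_id.sub measurable_const) measurable_const)
            hSmm (α / (1 - α))
        have hmm : volume {ω | Sm ω - μS < q} = volume {ω | Sm ω - μS < q} := rfl
        have hle : (∫ ω, (if Sm ω - μS < q then (1:ℝ) else -(α / (1 - α)))) ≤ 0 := by
          rw [hInt]
          have hτα : (1 - α) * (α / (1 - α)) = α := by
            rw [mul_comm]
            exact div_mul_cancel₀ α (ne_of_gt (by linarith : (0:ℝ) < 1 - α))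
          nlinarith [hq2]
        nlinarith [hle, hm]
  · -- Part 3: pricing formula
    rw [hθdef, hηdef, Fin.sum_univ_succ, Fin.sum_univ_succ]
    simp only [Fin.succ_ne_zero, if_false, if_true, eq_self_iff_true, zero_mul,
      Finset.sum_const_zero, add_zero, hy0, mul_one]
    ring
end

section
/- Suppose the asset payoffs Y = (Y₀, Y₁, …, Yₙ) are square-integrable and non-redundant, with time-0 prices y ∈ ℝ^{n+1}, let α ∈ (0,1), i ∈ (0,1), λ ≥ 0, and let S be a square-integrable liability. If η is a minimizer over β ∈ ℝ^{n+1} of E[ℓ_α(S − θ_S·Y − β·Y)], then λ·η is a minimizer over β of E[ℓ_α(λS − θ_{λS}·Y − β·Y)], and the corresponding mean-quantile valuations satisfy ρ(λS) = λ·ρ(S). -/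
open MeasureTheory

lemma KBLoss_nonneg {α : ℝ} (hα : α ∈ Set.Ioo (0 : ℝ) 1) (x : ℝ) : 0 ≤ KBLoss α x := by
  have h1 : 0 ≤ α / (1 - α) := div_nonneg hα.1.le (by linarith [hα.2])
  exact add_nonneg (mul_nonneg h1 (le_max_right _ _)) (le_max_right _ _)

lemma KBLoss_mul {α l : ℝ} (hl : 0 ≤ l) (x : ℝ) : KBLoss α (l * x) = l * KBLoss α x := by
  have h1 : max (l * x) 0 = l * max x 0 := by
    rw [mul_max_of_nonneg _ _ hl, mul_zero]
  have h2 : max (-(l * x)) 0 = l * max (-x) 0 := by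
    rw [mul_max_of_nonneg _ _ hl, mul_zero, neg_mul_eq_mul_neg]
  unfold KBLoss
  rw [h1, h2]
  ring

lemma quad_min_unique {Ω : Type*} [MeasureSpace Ω] [IsProbabilityMeasure (volume : Measure Ω)]
    (n : ℕ) (Y : Fin (n + 1) → Ω → ℝ)
    (hY : ∀ i, MemLp (Y i) 2 volume)
    (hNR : ∀ β : Fin (n + 1) → ℝ, (∀ᵐ ω, ∑ i, β i * Y i ω = 0) → β = 0)
    (T : Ω → ℝ) (hT : MemLp T 2 volume)
    (β₁ β₂ : Fin (n + 1) → ℝ)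
    (h₁ : ∀ β : Fin (n + 1) → ℝ,
      (∫ ω, (T ω - ∑ i, β₁ i * Y i ω) ^ 2) ≤ ∫ ω, (T ω - ∑ i, β i * Y i ω) ^ 2)
    (h₂ : ∀ β : Fin (n + 1) → ℝ,
      (∫ ω, (T ω - ∑ i, β₂ i * Y i ω) ^ 2) ≤ ∫ ω, (T ω - ∑ i, β i * Y i ω) ^ 2) :
    β₁ = β₂ := by
  have hcomb : ∀ β : Fin (n + 1) → ℝ, MemLp (fun ω => ∑ i, β i * Y i ω) 2 volume := by
    intro β
    exact memLp_finset_sum _ (fun i _ => (hY i).const_mul (β i))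
  have hres : ∀ β : Fin (n + 1) → ℝ, Integrable (fun ω => (T ω - ∑ i, β i * Y i ω) ^ 2) volume :=
    fun β => (hT.sub (hcomb β)).integrable_sq
  set d : Fin (n + 1) → ℝ := fun i => (β₂ i - β₁ i) / 2 with hd
  set mid : Fin (n + 1) → ℝ := fun i => (β₁ i + β₂ i) / 2 with hmiddef
  have hIg : Integrable (fun ω => (∑ i, d i * Y i ω) ^ 2) volume := (hcomb d).integrable_sq
  have hmid : ∀ ω, (T ω - ∑ i, mid i * Y i ω) ^ 2 =
      ((T ω - ∑ i, β₁ i * Y i ω) ^ 2 + (T ω - ∑ i, β₂ i * Y i ω) ^ 2) / 2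
        - (∑ i, d i * Y i ω) ^ 2 := by
    intro ω
    have h1 : ∑ i, mid i * Y i ω = (∑ i, β₁ i * Y i ω + ∑ i, β₂ i * Y i ω) / 2 := by
      rw [← Finset.sum_add_distrib, Finset.sum_div]
      exact Finset.sum_congr rfl (fun i _ => by simp only [hmiddef]; ring)
    have h2 : ∑ i, d i * Y i ω = (∑ i, β₂ i * Y i ω - ∑ i, β₁ i * Y i ω) / 2 := by
      rw [← Finset.sum_sub_distrib, Finset.sum_div]
      exact Finset.sum_congr rfl (fun i _ => by simp only [hd]; ring)
    rw [h1, h2]; ring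
  have hmm : (∫ ω, (T ω - ∑ i, β₁ i * Y i ω) ^ 2) = ∫ ω, (T ω - ∑ i, β₂ i * Y i ω) ^ 2 :=
    le_antisymm (h₁ β₂) (h₂ β₁)
  have hint : (∫ ω, (T ω - ∑ i, mid i * Y i ω) ^ 2) =
      ((∫ ω, (T ω - ∑ i, β₁ i * Y i ω) ^ 2) + ∫ ω, (T ω - ∑ i, β₂ i * Y i ω) ^ 2) / 2
        - ∫ ω, (∑ i, d i * Y i ω) ^ 2 := by
    have hI12 : Integrable (fun ω =>
        ((T ω - ∑ i, β₁ i * Y i ω) ^ 2 + (T ω - ∑ i, β₂ i * Y i ω) ^ 2) / 2) volume :=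
      ((hres β₁).add (hres β₂)).div_const 2
    simp_rw [hmid]
    rw [integral_sub hI12 hIg, integral_div, integral_add (hres β₁) (hres β₂)]
  have hle := h₁ mid
  rw [hint, ← hmm] at hle
  have hgz : (∫ ω, (∑ i, d i * Y i ω) ^ 2) = 0 :=
    le_antisymm (by linarith) (integral_nonneg (fun ω => sq_nonneg _))
  have hae : ∀ᵐ ω, ∑ i, d i * Y i ω = 0 := by
    have := (integral_eq_zero_iff_of_nonneg (fun ω => sq_nonneg (∑ i, d i * Y i ω)) hIg).mp hgz
    filter_upwards [this] with ω hω
    exact (pow_eq_zero_iff two_ne_zero).mp hω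
  have hd0 := hNR d hae
  funext i
  have : (β₂ i - β₁ i) / 2 = 0 := congrFun hd0 i
  linarith

/-- Positive homogeneity of the mean-quantile valuation. With non-redundant
square-integrable assets and `λ ≥ 0`: if `η` minimizes the residual Koenker–Bassett error for
`S`, then `λ·η` minimizes the residual Koenker–Bassett error for `λS`, and the mean-quantile
valuations satisfy `ρ(λS) = λ·ρ(S)`. -/
theorem mean_quantile_valuation_posHom
    {Ω : Type*} [MeasureSpace Ω] [IsProbabilityMeasure (volume : Measure Ω)]
    (n : ℕ) (Y : Fin (n + 1) → Ω → ℝ) (y : Fin (n + 1) → ℝ)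
    (hY : ∀ i, MemLp (Y i) 2 volume)
    (hNR : ∀ β : Fin (n + 1) → ℝ, (∀ᵐ ω, ∑ i, β i * Y i ω = 0) → β = 0)
    (α : ℝ) (hα : α ∈ Set.Ioo (0 : ℝ) 1)
    (coc : ℝ) (hcoc : coc ∈ Set.Ioo (0 : ℝ) 1)
    (l : ℝ) (hl : 0 ≤ l)
    (S : Ω → ℝ) (hS : MemLp S 2 volume)
    (θS θlS : Fin (n + 1) → ℝ)
    (hθS : ∀ β : Fin (n + 1) → ℝ,
      (∫ ω, (S ω - ∑ i, θS i * Y i ω) ^ 2) ≤ ∫ ω, (S ω - ∑ i, β i * Y i ω) ^ 2)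
    (hθlS : ∀ β : Fin (n + 1) → ℝ,
      (∫ ω, (l * S ω - ∑ i, θlS i * Y i ω) ^ 2) ≤ ∫ ω, (l * S ω - ∑ i, β i * Y i ω) ^ 2)
    (η : Fin (n + 1) → ℝ)
    (hη : ∀ β : Fin (n + 1) → ℝ,
      (∫ ω, KBLoss α (S ω - ∑ i, θS i * Y i ω - ∑ i, η i * Y i ω))
        ≤ ∫ ω, KBLoss α (S ω - ∑ i, θS i * Y i ω - ∑ i, β i * Y i ω)) :
    (∀ β : Fin (n + 1) → ℝ,
      (∫ ω, KBLoss α (l * S ω - ∑ i, θlS i * Y i ω - ∑ i, (l • η) i * Y i ω))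
        ≤ ∫ ω, KBLoss α (l * S ω - ∑ i, θlS i * Y i ω - ∑ i, β i * Y i ω)) ∧
    (∑ i, θlS i * y i) + coc * ∑ i, (l • η) i * y i
      = l * ((∑ i, θS i * y i) + coc * ∑ i, η i * y i) := by
  -- Step 1: `l • θS` is also a quadratic minimizer for `l * S`.
  have hmin : ∀ β : Fin (n + 1) → ℝ,
      (∫ ω, (l * S ω - ∑ i, (l • θS) i * Y i ω) ^ 2)
        ≤ ∫ ω, (l * S ω - ∑ i, β i * Y i ω) ^ 2 := by
    intro β
    rcases hl.eq_or_lt with h0 | hl'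
    · simp only [← h0, Pi.smul_apply, smul_eq_mul, zero_mul, Finset.sum_const_zero, sub_zero,
        ne_eq, OfNat.ofNat_ne_zero, not_false_eq_true, zero_pow, integral_zero]
      exact integral_nonneg (fun ω => sq_nonneg _)
    · have hL : ∀ ω, (l * S ω - ∑ i, (l • θS) i * Y i ω) ^ 2
          = l ^ 2 * (S ω - ∑ i, θS i * Y i ω) ^ 2 := by
        intro ω
        rw [show ∑ i, (l • θS) i * Y i ω = l * ∑ i, θS i * Y i ω by
          rw [Finset.mul_sum]; exact Finset.sum_congr rfl (fun i _ => by simp [mul_assoc])]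
        ring
      have hR : ∀ ω, (l * S ω - ∑ i, β i * Y i ω) ^ 2
          = l ^ 2 * (S ω - ∑ i, (l⁻¹ • β) i * Y i ω) ^ 2 := by
        intro ω
        rw [show ∑ i, (l⁻¹ • β) i * Y i ω = l⁻¹ * ∑ i, β i * Y i ω by
          rw [Finset.mul_sum]; exact Finset.sum_congr rfl (fun i _ => by simp [mul_assoc])]
        field_simp
      simp_rw [hL, hR]
      rw [integral_const_mul, integral_const_mul]
      exact mul_le_mul_of_nonneg_left (hθS (l⁻¹ • β)) (sq_nonneg l)
  have heq : θlS = l • θS :=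
    quad_min_unique n Y hY hNR (fun ω => l * S ω) (hS.const_mul l) θlS (l • θS) hθlS hmin
  subst heq
  have hsum : ∀ (β : Fin (n + 1) → ℝ) (ω : Ω), ∑ i, (l • β) i * Y i ω = l * ∑ i, β i * Y i ω := by
    intro β ω
    rw [Finset.mul_sum]; exact Finset.sum_congr rfl (fun i _ => by simp [mul_assoc])
  constructor
  · intro β
    have hL : ∀ ω, KBLoss α (l * S ω - ∑ i, (l • θS) i * Y i ω - ∑ i, (l • η) i * Y i ω)
        = l * KBLoss α (S ω - ∑ i, θS i * Y i ω - ∑ i, η i * Y i ω) := by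
      intro ω
      rw [hsum θS ω, hsum η ω, show l * S ω - l * ∑ i, θS i * Y i ω - l * ∑ i, η i * Y i ω
        = l * (S ω - ∑ i, θS i * Y i ω - ∑ i, η i * Y i ω) by ring, KBLoss_mul hl]
    simp_rw [hL]
    rw [integral_const_mul]
    rcases hl.eq_or_lt with h0 | hl'
    · rw [← h0, zero_mul]
      exact integral_nonneg (fun ω => KBLoss_nonneg hα _)
    · have hR : ∀ ω, KBLoss α (l * S ω - ∑ i, (l • θS) i * Y i ω - ∑ i, β i * Y i ω)
          = l * KBLoss α (S ω - ∑ i, θS i * Y i ω - ∑ i, (l⁻¹ • β) i * Y i ω) := by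
        intro ω
        have hb : ∑ i, β i * Y i ω = l * ∑ i, (l⁻¹ • β) i * Y i ω := by
          rw [Finset.mul_sum]
          refine Finset.sum_congr rfl fun i _ => ?_
          simp only [Pi.smul_apply, smul_eq_mul]
          field_simp
        rw [hsum θS ω, hb, show l * S ω - l * ∑ i, θS i * Y i ω
            - l * ∑ i, (l⁻¹ • β) i * Y i ω
          = l * (S ω - ∑ i, θS i * Y i ω - ∑ i, (l⁻¹ • β) i * Y i ω) by ring, KBLoss_mul hl]
      simp_rw [hR]
      rw [integral_const_mul]
      exact mul_le_mul_of_nonneg_left (hη (l⁻¹ • β)) hl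
  · have h1 : ∑ i, (l • θS) i * y i = l * ∑ i, θS i * y i := by
      rw [Finset.mul_sum]; exact Finset.sum_congr rfl (fun i _ => by simp [mul_assoc])
    have h2 : ∑ i, (l • η) i * y i = l * ∑ i, η i * y i := by
      rw [Finset.mul_sum]; exact Finset.sum_congr rfl (fun i _ => by simp [mul_assoc])
    rw [h1, h2]; ring
end

section
/- Suppose the asset payoffs Y = (Y₀, Y₁, …, Yₙ) are square-integrable and non-redundant with Y₀ = e^r a.s. for a constant r ≥ 0 and time-0 prices y = (1, y₁, …, yₙ), let α ∈ (0,1), i ∈ (0,1), a ∈ ℝ, and let S be a square-integrable liability. Then the quadratic hedging strategies satisfy θ_{S+a} = θ_S + (a·e^{−r}, 0, …, 0), the residual of S + a equals the residual of S, and for any common choice of residual quantile-hedging minimizer η the mean-quantile valuation is translation invariant: ρ(S + a) = ρ(S) + e^{−r}·a. -/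
open MeasureTheory

/-- Translation invariance of the mean-quantile valuation. With non-redundant
square-integrable assets, `Y₀ = e^r` a.s. and `y₀ = 1`: the quadratic hedging strategies
satisfy `θ_{S+a} = θ_S + (a·e^{−r}, 0, …, 0)`, the residual of `S + a` equals the residual of
`S` a.s., and for any common residual quantile-hedging minimizer `η` the mean-quantile
valuation satisfies `ρ(S + a) = ρ(S) + e^{−r}·a`. -/
theorem mean_quantile_valuation_translation_invariant
    {Ω : Type*} [MeasureSpace Ω] [IsProbabilityMeasure (volume : Measure Ω)]
    (n : ℕ) (Y : Fin (n + 1) → Ω → ℝ) (y : Fin (n + 1) → ℝ)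
    (hY : ∀ i, MemLp (Y i) 2 volume)
    (hNR : ∀ β : Fin (n + 1) → ℝ, (∀ᵐ ω, ∑ i, β i * Y i ω = 0) → β = 0)
    (r : ℝ) (hr : 0 ≤ r) (hY0 : ∀ᵐ ω, Y 0 ω = Real.exp r) (hy0 : y 0 = 1)
    (α : ℝ) (hα : α ∈ Set.Ioo (0 : ℝ) 1)
    (coc : ℝ) (hcoc : coc ∈ Set.Ioo (0 : ℝ) 1)
    (a : ℝ)
    (S : Ω → ℝ) (hS : MemLp S 2 volume)
    (θS θSa : Fin (n + 1) → ℝ)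
    (hθS : ∀ β : Fin (n + 1) → ℝ,
      (∫ ω, (S ω - ∑ i, θS i * Y i ω) ^ 2) ≤ ∫ ω, (S ω - ∑ i, β i * Y i ω) ^ 2)
    (hθSa : ∀ β : Fin (n + 1) → ℝ,
      (∫ ω, (S ω + a - ∑ i, θSa i * Y i ω) ^ 2)
        ≤ ∫ ω, (S ω + a - ∑ i, β i * Y i ω) ^ 2) :
    (θSa = θS + fun i => if i = 0 then a * Real.exp (-r) else 0) ∧
    (∀ᵐ ω, S ω + a - ∑ i, θSa i * Y i ω = S ω - ∑ i, θS i * Y i ω) ∧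
    (∀ η : Fin (n + 1) → ℝ,
      (∀ β : Fin (n + 1) → ℝ,
        (∫ ω, KBLoss α (S ω - ∑ i, θS i * Y i ω - ∑ i, β i * Y i ω))
          ≥ ∫ ω, KBLoss α (S ω - ∑ i, θS i * Y i ω - ∑ i, η i * Y i ω)) →
      (∑ i, θSa i * y i) + coc * ∑ i, η i * y i
        = ((∑ i, θS i * y i) + coc * ∑ i, η i * y i) + Real.exp (-r) * a) := by
  set c := a * Real.exp (-r) with hc
  set d : Fin (n + 1) → ℝ := fun i => if i = 0 then c else 0 with hd
  have hdsum : ∀ (z : Fin (n + 1) → ℝ), (∑ i, d i * z i) = c * z 0 := by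
    intro z
    simp [hd, ite_mul, Finset.sum_ite_eq']
  have hshift : ∀ (β : Fin (n + 1) → ℝ), ∀ᵐ ω,
      (∑ i, (β + d) i * Y i ω) = (∑ i, β i * Y i ω) + a := by
    intro β
    filter_upwards [hY0] with ω h0
    have h1 : ∑ i, (β + d) i * Y i ω
        = (∑ i, β i * Y i ω) + ∑ i, d i * Y i ω := by
      simp [Pi.add_apply, add_mul, Finset.sum_add_distrib]
    rw [h1, hdsum (fun i => Y i ω), h0, hc, mul_assoc, ← Real.exp_add]
    simp
  have hmem : ∀ (β : Fin (n + 1) → ℝ),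
      MemLp (fun ω => S ω + a - ∑ i, β i * Y i ω) 2 volume := by
    intro β
    exact (hS.add (memLp_const a)).sub
      (memLp_finset_sum Finset.univ fun i _ => (hY i).const_mul (β i))
  have hint : ∀ (β : Fin (n + 1) → ℝ),
      Integrable (fun ω => (S ω + a - ∑ i, β i * Y i ω) ^ 2) := fun β =>
    (hmem β).integrable_sq
  have key : ∀ (β : Fin (n + 1) → ℝ),
      (∫ ω, (S ω + a - ∑ i, (β + d) i * Y i ω) ^ 2)
        = ∫ ω, (S ω - ∑ i, β i * Y i ω) ^ 2 := by
    intro β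
    apply integral_congr_ae
    filter_upwards [hshift β] with ω h
    rw [h]; ring
  set θ' := θS + d with hθ'
  have hθ'min : ∀ (β : Fin (n + 1) → ℝ),
      (∫ ω, (S ω + a - ∑ i, θ' i * Y i ω) ^ 2)
        ≤ ∫ ω, (S ω + a - ∑ i, β i * Y i ω) ^ 2 := by
    intro β
    have h2 := key (β - d)
    have h3 : β - d + d = β := by funext i; simp
    rw [h3] at h2
    rw [hθ', key θS, h2]
    exact hθS (β - d)
  have heq : (∫ ω, (S ω + a - ∑ i, θSa i * Y i ω) ^ 2)
      = ∫ ω, (S ω + a - ∑ i, θ' i * Y i ω) ^ 2 :=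
    le_antisymm (hθSa _) (hθ'min _)
  set δ := θSa - θ' with hδ
  have hδmem : MemLp (fun ω => ∑ i, δ i * Y i ω) 2 volume :=
    memLp_finset_sum Finset.univ fun i _ => (hY i).const_mul (δ i)
  have hδint : Integrable (fun ω => (∑ i, δ i * Y i ω) ^ 2) := hδmem.integrable_sq
  set m : Fin (n + 1) → ℝ := fun i => (θSa i + θ' i) / 2 with hm
  have pm : ∀ ω, ∑ i, m i * Y i ω
      = ((∑ i, θSa i * Y i ω) + ∑ i, θ' i * Y i ω) / 2 := by
    intro ω
    rw [← Finset.sum_add_distrib, Finset.sum_div]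
    refine Finset.sum_congr rfl fun i _ => ?_
    simp only [hm]
    ring
  have pd : ∀ ω, ∑ i, δ i * Y i ω
      = (∑ i, θSa i * Y i ω) - ∑ i, θ' i * Y i ω := by
    intro ω
    rw [← Finset.sum_sub_distrib]
    exact Finset.sum_congr rfl fun i _ => by simp [hδ]; ring
  have par : (∫ ω, (S ω + a - ∑ i, θSa i * Y i ω) ^ 2)
        + (∫ ω, (S ω + a - ∑ i, θ' i * Y i ω) ^ 2)
      = 2 * (∫ ω, (S ω + a - ∑ i, m i * Y i ω) ^ 2)
        + (1 / 2) * ∫ ω, (∑ i, δ i * Y i ω) ^ 2 := by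
    rw [← integral_add (hint θSa) (hint θ'), ← integral_const_mul, ← integral_const_mul,
      ← integral_add ((hint m).const_mul 2) (hδint.const_mul (1 / 2))]
    apply integral_congr_ae
    refine Filter.Eventually.of_forall fun ω => ?_
    dsimp only
    rw [pm ω, pd ω]
    ring
  have hBle : (∫ ω, (∑ i, δ i * Y i ω) ^ 2) ≤ 0 := by
    have hmge := hθ'min m
    rw [heq] at par
    nlinarith
  have hB0 : (∫ ω, (∑ i, δ i * Y i ω) ^ 2) = 0 :=
    le_antisymm hBle (integral_nonneg fun ω => sq_nonneg _)
  have hδ0 : δ = 0 := by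
    apply hNR
    have := (integral_eq_zero_iff_of_nonneg (fun ω => sq_nonneg _) hδint).mp hB0
    filter_upwards [this] with ω h
    exact pow_eq_zero_iff (by norm_num) |>.mp h
  have hθSaθ' : θSa = θ' := by
    have := sub_eq_zero.mp hδ0
    exact this
  refine ⟨hθSaθ', ?_, ?_⟩
  · filter_upwards [hshift θS] with ω h
    rw [hθSaθ', hθ', h]
    ring
  · intro η _
    have h1 : ∑ i, θSa i * y i = (∑ i, θS i * y i) + c := by
      rw [hθSaθ', hθ']
      have : ∑ i, (θS + d) i * y i = (∑ i, θS i * y i) + ∑ i, d i * y i := by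
        simp [Pi.add_apply, add_mul, Finset.sum_add_distrib]
      rw [this, hdsum y, hy0, mul_one]
    rw [h1, hc]
    ring
end

section
/- Let X be an integrable random variable whose cumulative distribution function is continuous, and let α ∈ (0,1). Then, with q = VaR_α(X), one has TVaR_α(X) = q + (1/(1−α))·E[max(X − q, 0)], and the minimum over c ∈ ℝ of E[ℓ_α(X − c)] equals the TVaR deviation: min_{c ∈ ℝ} E[ℓ_α(X − c)] = TVaR_α(X) − E[X]. -/
open MeasureTheory Set Filter Topology
open scoped ENNReal

/-- Tail Value-at-Risk at level `α`: `TVaR_α(X) = (1/(1−α))·∫_α^1 VaR_u(X) du`. -/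
noncomputable def TVaR {Ω : Type*} [MeasureSpace Ω] (X : Ω → ℝ) (α : ℝ) : ℝ :=
  (1 / (1 - α)) * ∫ u in α..1, VaR X u

namespace TVaRAux

/-- Generalised inverse (quantile function) of `F`. -/
noncomputable def qg (F : ℝ → ℝ) (u : ℝ) : ℝ := sInf {x | u ≤ F x}

section Quantile

variable {F : ℝ → ℝ} (hmono : Monotone F) (hc : Continuous F)
  (hne : ∀ u : ℝ, u < 1 → ∃ b, u ≤ F b) (hlt : ∀ u : ℝ, 0 < u → ∃ b, F b < u)

include hmono hlt in
lemma bddBelow_S {u : ℝ} (hu : 0 < u) : BddBelow {x | u ≤ F x} := by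
  obtain ⟨b, hb⟩ := hlt u hu
  exact ⟨b, fun x hx => not_lt.1 fun h => absurd (hx.trans (hmono h.le)) (not_le.2 hb)⟩

include hmono hc hne hlt in
lemma F_qg {u : ℝ} (hu : u ∈ Set.Ioo (0:ℝ) 1) : F (qg F u) = u := by
  have hSne : {x | u ≤ F x}.Nonempty := hne u hu.2
  have hbdd := bddBelow_S hmono hlt hu.1
  have hclosed : IsClosed {x | u ≤ F x} := isClosed_Ici.preimage hc
  have hmem : qg F u ∈ {x | u ≤ F x} := hclosed.csInf_mem hSne hbdd
  refine le_antisymm ?_ hmem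
  by_contra h
  push_neg at h
  have hev : ∀ᶠ x in 𝓝 (qg F u), u < F x := (hc.tendsto _).eventually (eventually_gt_nhds h)
  obtain ⟨x, hx, hxlt⟩ :=
    ((hev.filter_mono (nhdsWithin_le_nhds (s := Set.Iio (qg F u)))).and
      eventually_mem_nhdsWithin).exists
  exact absurd (csInf_le hbdd (le_of_lt hx : u ≤ F x)) (not_le.2 hxlt)

include hmono hc hne hlt in
lemma lt_qg_iff {u : ℝ} (hu : u ∈ Set.Ioo (0:ℝ) 1) (t : ℝ) : t < qg F u ↔ F t < u := by
  constructor
  · intro h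
    by_contra hge
    exact absurd (csInf_le (bddBelow_S hmono hlt hu.1) (not_lt.1 hge : u ≤ F t)) (not_le.2 h)
  · intro h
    by_contra hle
    exact absurd ((F_qg hmono hc hne hlt hu).symm.le.trans (hmono (not_lt.1 hle)))
      (not_le.2 h)

include hmono hne hlt in
lemma qg_mono {u v : ℝ} (hu : 0 < u) (hv : v < 1) (huv : u ≤ v) : qg F u ≤ qg F v :=
  csInf_le_csInf (bddBelow_S hmono hlt hu) (hne v hv) (fun _ hx => le_trans huv hx)

include hmono hc hne hlt in
lemma lintegral_qg_sub {α : ℝ} (hα : α ∈ Set.Ioo (0:ℝ) 1) :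
    ∫⁻ u in Set.Ioo α 1, ENNReal.ofReal (qg F u - qg F α) =
      ∫⁻ t in Set.Ioi (qg F α), ENNReal.ofReal (1 - F t) := by
  set qa := qg F α with hqa_def
  have hqa : F qa = α := F_qg hmono hc hne hlt hα
  set s : Set (ℝ × ℝ) := {p : ℝ × ℝ | F p.2 < p.1} with hs_def
  have hs : MeasurableSet s := measurableSet_lt (hc.measurable.comp measurable_snd) measurable_fst
  have hmeas : Measurable (Function.uncurry fun u t => s.indicator (1 : ℝ × ℝ → ℝ≥0∞) (u, t)) := by
    have : (Function.uncurry fun u t => s.indicator (1 : ℝ × ℝ → ℝ≥0∞) (u, t)) =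
        s.indicator (1 : ℝ × ℝ → ℝ≥0∞) := by
      funext p; rfl
    rw [this]
    exact measurable_const.indicator hs
  have step1 : ∀ u ∈ Set.Ioo α 1, ENNReal.ofReal (qg F u - qa) =
      ∫⁻ t in Set.Ioi qa, s.indicator (1 : ℝ × ℝ → ℝ≥0∞) (u, t) := by
    intro u hu
    have hu01 : u ∈ Set.Ioo (0:ℝ) 1 := ⟨hα.1.trans hu.1, hu.2⟩
    have hset : Set.Ioi qa ∩ {t : ℝ | F t < u} = Set.Ioo qa (qg F u) := by
      ext t
      simp only [Set.mem_inter_iff, Set.mem_Ioi, Set.mem_setOf_eq, Set.mem_Ioo]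
      exact and_congr_right fun _ => (lt_qg_iff hmono hc hne hlt hu01 t).symm
    have hind : ∀ t : ℝ, s.indicator (1 : ℝ × ℝ → ℝ≥0∞) (u, t) =
        ({t : ℝ | F t < u}).indicator (1 : ℝ → ℝ≥0∞) t := by
      intro t
      by_cases h : F t < u
      · rw [Set.indicator_of_mem (by exact h), Set.indicator_of_mem (by exact h)]; rfl
      · rw [Set.indicator_of_notMem (by exact h), Set.indicator_of_notMem (by exact h)]
    simp only [hind]
    rw [lintegral_indicator_one (measurableSet_lt (hc.measurable) measurable_const),
      Measure.restrict_apply (measurableSet_lt (hc.measurable) measurable_const),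
      Set.inter_comm, hset, Real.volume_Ioo]
  rw [setLIntegral_congr_fun measurableSet_Ioo step1]
  rw [lintegral_lintegral_swap hmeas.aemeasurable]
  refine setLIntegral_congr_fun measurableSet_Ioi ?_
  intro t ht
  have hαF : α ≤ F t := hqa ▸ hmono (le_of_lt ht)
  have hind : ∀ u : ℝ, s.indicator (1 : ℝ × ℝ → ℝ≥0∞) (u, t) =
      (Set.Ioi (F t)).indicator (1 : ℝ → ℝ≥0∞) u := by
    intro u
    by_cases h : F t < u
    · rw [Set.indicator_of_mem (by exact h), Set.indicator_of_mem (by exact h)]; rfl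
    · rw [Set.indicator_of_notMem (by exact h), Set.indicator_of_notMem (by exact h)]
  simp only [hind]
  rw [lintegral_indicator_one measurableSet_Ioi,
    Measure.restrict_apply measurableSet_Ioi, Set.inter_comm]
  have : Set.Ioo α 1 ∩ Set.Ioi (F t) = Set.Ioo (F t) 1 := by
    ext u
    simp only [Set.mem_inter_iff, Set.mem_Ioo, Set.mem_Ioi]
    constructor
    · rintro ⟨⟨_, h2⟩, h3⟩; exact ⟨h3, h2⟩
    · rintro ⟨h1, h2⟩; exact ⟨⟨lt_of_le_of_lt hαF h1, h2⟩, h1⟩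
  rw [this, Real.volume_Ioo]

end Quantile

lemma lintegral_max_layer (μ : Measure ℝ) [SFinite μ] (c : ℝ) :
    ∫⁻ x, ENNReal.ofReal (max (x - c) 0) ∂μ = ∫⁻ t in Set.Ioi c, μ (Set.Ioi t) ∂volume := by
  set s : Set (ℝ × ℝ) := {p : ℝ × ℝ | p.2 < p.1} with hs_def
  have hs : MeasurableSet s := measurableSet_lt measurable_snd measurable_fst
  have hmeas : Measurable (Function.uncurry fun x t => s.indicator (1 : ℝ × ℝ → ℝ≥0∞) (x, t)) := by
    have : (Function.uncurry fun x t => s.indicator (1 : ℝ × ℝ → ℝ≥0∞) (x, t)) =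
        s.indicator (1 : ℝ × ℝ → ℝ≥0∞) := by funext p; rfl
    rw [this]; exact measurable_const.indicator hs
  have step1 : ∀ x : ℝ, ENNReal.ofReal (max (x - c) 0) =
      ∫⁻ t in Set.Ioi c, s.indicator (1 : ℝ × ℝ → ℝ≥0∞) (x, t) := by
    intro x
    have hind : ∀ t : ℝ, s.indicator (1 : ℝ × ℝ → ℝ≥0∞) (x, t) =
        (Set.Iio x).indicator (1 : ℝ → ℝ≥0∞) t := by
      intro t
      by_cases h : t < x
      · rw [Set.indicator_of_mem (by exact h), Set.indicator_of_mem (by exact h)]; rfl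
      · rw [Set.indicator_of_notMem (by exact h), Set.indicator_of_notMem (by exact h)]
    simp only [hind]
    rw [lintegral_indicator_one measurableSet_Iio,
      Measure.restrict_apply measurableSet_Iio, Set.inter_comm, Set.Ioi_inter_Iio,
      Real.volume_Ioo]
    rcases le_total x c with h | h
    · simp [max_eq_right (sub_nonpos.2 h), ENNReal.ofReal_of_nonpos (sub_nonpos.2 h)]
    · rw [max_eq_left (sub_nonneg.2 h)]
  rw [lintegral_congr step1, lintegral_lintegral_swap hmeas.aemeasurable]
  refine setLIntegral_congr_fun measurableSet_Ioi ?_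
  intro t _
  have hind : ∀ x : ℝ, s.indicator (1 : ℝ × ℝ → ℝ≥0∞) (x, t) =
      (Set.Ioi t).indicator (1 : ℝ → ℝ≥0∞) x := by
    intro x
    by_cases h : t < x
    · rw [Set.indicator_of_mem (by exact h), Set.indicator_of_mem (by exact h)]; rfl
    · rw [Set.indicator_of_notMem (by exact h), Set.indicator_of_notMem (by exact h)]
  simp only [hind]
  rw [lintegral_indicator_one measurableSet_Ioi]

section Cdf

variable {μ : Measure ℝ} [IsProbabilityMeasure μ]

lemma F_nonneg (x : ℝ) : 0 ≤ (μ (Iic x)).toReal := ENNReal.toReal_nonneg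

lemma F_le_one (x : ℝ) : (μ (Iic x)).toReal ≤ 1 := by
  simpa using ENNReal.toReal_mono ENNReal.one_ne_top (prob_le_one (μ := μ) (s := Iic x))

lemma F_mono : Monotone (fun x => (μ (Iic x)).toReal) := fun _ _ h =>
  ENNReal.toReal_mono (measure_ne_top _ _) (measure_mono (Iic_subset_Iic.2 h))

lemma measure_Iic_eq (x : ℝ) : μ (Iic x) = ENNReal.ofReal ((μ (Iic x)).toReal) :=
  (ENNReal.ofReal_toReal (measure_ne_top μ _)).symm

lemma measure_Ioi_eq (x : ℝ) : μ (Ioi x) = ENNReal.ofReal (1 - (μ (Iic x)).toReal) := by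
  have h : μ (Ioi x) = 1 - μ (Iic x) := by
    rw [← compl_Iic, measure_compl measurableSet_Iic (measure_ne_top μ _), measure_univ]
  rw [h, ENNReal.ofReal_sub _ (F_nonneg (μ := μ) x), ENNReal.ofReal_one, ← measure_Iic_eq x]

lemma tendsto_F_atTop : Tendsto (fun x => (μ (Iic x)).toReal) atTop (𝓝 1) := by
  have h := tendsto_measure_Iic_atTop μ
  rw [measure_univ] at h
  have := (ENNReal.tendsto_toReal ENNReal.one_ne_top).comp h
  simpa [Function.comp_def] using this

lemma exists_F_lt {u : ℝ} (hu : 0 < u) : ∃ b : ℝ, (μ (Iic b)).toReal < u := by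
  have hanti : Antitone (fun n : ℕ => Iic (-(n : ℝ))) := fun a b hab =>
    Iic_subset_Iic.2 (by exact_mod_cast neg_le_neg (by exact_mod_cast hab))
  have h : Tendsto (fun n : ℕ => μ (Iic (-(n : ℝ)))) atTop
      (𝓝 (μ (⋂ n : ℕ, Iic (-(n : ℝ))))) :=
    tendsto_measure_iInter_atTop (fun _ => measurableSet_Iic.nullMeasurableSet) hanti
      ⟨0, measure_ne_top _ _⟩
  have hempty : (⋂ n : ℕ, Iic (-(n : ℝ))) = ∅ := by
    ext x
    simp only [mem_iInter, mem_Iic, mem_empty_iff_false, iff_false, not_forall, not_le]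
    obtain ⟨n, hn⟩ := exists_nat_gt (-x)
    exact ⟨n, by linarith⟩
  rw [hempty, measure_empty] at h
  have h2 : Tendsto (fun n : ℕ => (μ (Iic (-(n : ℝ)))).toReal) atTop (𝓝 0) := by
    have := (ENNReal.tendsto_toReal ENNReal.zero_ne_top).comp h
    simpa [Function.comp_def] using this
  obtain ⟨n, hn⟩ := (h2.eventually (eventually_lt_nhds hu)).exists
  exact ⟨-(n : ℝ), hn⟩

lemma exists_le_F {u : ℝ} (hu : u < 1) : ∃ b : ℝ, u ≤ (μ (Iic b)).toReal :=
  ((tendsto_F_atTop (μ := μ)).eventually (eventually_ge_nhds hu)).exists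

end Cdf

end TVaRAux

open TVaRAux in
/-- For an integrable `X` with continuous cdf and `α ∈ (0,1)`, writing
`q = VaR_α(X)`, one has `TVaR_α(X) = q + (1/(1−α))·E[max(X − q, 0)]`, and the minimum of
`c ↦ E[ℓ_α(X − c)]` over `c ∈ ℝ` is attained and equals `TVaR_α(X) − E[X]`. -/
theorem TVaR_representation_and_KB_min
    {Ω : Type*} [MeasureSpace Ω] [IsProbabilityMeasure (volume : Measure Ω)]
    (X : Ω → ℝ) (hX : Integrable X volume)
    (hcdf : Continuous fun x : ℝ => (volume {ω | X ω ≤ x}).toReal)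
    (α : ℝ) (hα : α ∈ Set.Ioo (0 : ℝ) 1) :
    TVaR X α = VaR X α + (1 / (1 - α)) * ∫ ω, max (X ω - VaR X α) 0 ∧
    IsLeast {v : ℝ | ∃ c : ℝ, v = ∫ ω, KBLoss α (X ω - c)}
      (TVaR X α - ∫ ω, X ω) := by
  obtain ⟨hα0, hα1⟩ := hα
  have h1α : (0:ℝ) < 1 - α := by linarith
  have hXm : AEMeasurable X volume := hX.aemeasurable
  set μ : Measure ℝ := Measure.map X volume with hμ
  haveI : IsProbabilityMeasure μ := Measure.isProbabilityMeasure_map hXm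
  set F : ℝ → ℝ := fun x => (μ (Iic x)).toReal with hF
  have hFX : ∀ x : ℝ, F x = (volume {ω | X ω ≤ x}).toReal := by
    intro x
    have : μ (Iic x) = volume {ω | X ω ≤ x} := by
      rw [hμ, Measure.map_apply_of_aemeasurable hXm measurableSet_Iic]
      rfl
    exact congrArg ENNReal.toReal this
  have hc : Continuous F := by
    have : F = fun x : ℝ => (volume {ω | X ω ≤ x}).toReal := funext hFX
    rw [this]; exact hcdf
  have hmono : Monotone F := F_mono
  have hne : ∀ u : ℝ, u < 1 → ∃ b, u ≤ F b := fun u hu => exists_le_F hu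
  have hlt : ∀ u : ℝ, 0 < u → ∃ b, F b < u := fun u hu => exists_F_lt hu
  have hVaR : ∀ u : ℝ, VaR X u = qg F u := by
    intro u
    unfold VaR qg
    congr 1
    ext x
    simp only [Set.mem_setOf_eq, hFX]
  set qa : ℝ := qg F α with hqa_def
  have hα' : α ∈ Set.Ioo (0:ℝ) 1 := ⟨hα0, hα1⟩
  have hFqa : F qa = α := F_qg hmono hc hne hlt hα'
  -- integrability of id w.r.t. μ
  have hid : Integrable (fun x : ℝ => x) μ := by
    have := (integrable_map_measure aestronglyMeasurable_id hXm).mpr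
    exact this (by simpa [Function.comp] using hX)
  have hmax_int : ∀ c : ℝ, Integrable (fun x => max (x - c) 0) μ := by
    intro c
    have h1 : Integrable (fun x : ℝ => x - c) μ := hid.sub (integrable_const c)
    have := h1.sup (integrable_zero ℝ ℝ μ)
    simpa [Pi.sup_def] using this
  -- the common lintegral value
  have key : ∫⁻ u in Set.Ioo α 1, ENNReal.ofReal (qg F u - qa) =
      ∫⁻ x, ENNReal.ofReal (max (x - qa) 0) ∂μ := by
    rw [lintegral_qg_sub hmono hc hne hlt hα', lintegral_max_layer μ qa]
    exact setLIntegral_congr_fun measurableSet_Ioi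
      (fun t _ => (measure_Ioi_eq t).symm)

  set Ep : ℝ → ℝ := fun c => ∫ x, max (x - c) 0 ∂μ with hEp
  have hEp_nonneg : ∀ c, 0 ≤ Ep c := fun c => integral_nonneg fun x => le_max_right _ _
  have hofReal : ∀ c : ℝ, ∫⁻ x, ENNReal.ofReal (max (x - c) 0) ∂μ = ENNReal.ofReal (Ep c) :=
    fun c => (ofReal_integral_eq_lintegral_ofReal (hmax_int c)
      (Filter.Eventually.of_forall fun x => le_max_right _ _)).symm
  haveI : IsFiniteMeasure (volume.restrict (Set.Ioo α (1:ℝ))) :=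
    ⟨by rw [Measure.restrict_apply_univ, Real.volume_Ioo]; exact ENNReal.ofReal_lt_top⟩
  have hqmonoOn : MonotoneOn (qg F) (Set.Ioo α 1) := fun u hu v hv huv =>
    qg_mono hmono hne hlt (hα0.trans hu.1) hv.2 huv
  have haem : AEMeasurable (qg F) (volume.restrict (Set.Ioo α 1)) :=
    aemeasurable_restrict_of_monotoneOn measurableSet_Ioo hqmonoOn
  have hqa_le : ∀ u ∈ Set.Ioo α 1, qa ≤ qg F u := fun u hu =>
    qg_mono hmono hne hlt hα0 hu.2 hu.1.le
  have hg_nonneg : 0 ≤ᵐ[volume.restrict (Set.Ioo α 1)] fun u => qg F u - qa :=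
    (ae_restrict_iff' measurableSet_Ioo).2
      (Filter.Eventually.of_forall fun u hu => sub_nonneg.2 (hqa_le u hu))
  have hg_fin : HasFiniteIntegral (fun u => qg F u - qa) (volume.restrict (Set.Ioo α 1)) := by
    rw [hasFiniteIntegral_iff_ofReal hg_nonneg]
    rw [key, hofReal qa]
    exact ENNReal.ofReal_lt_top
  have hg_int : Integrable (fun u => qg F u - qa) (volume.restrict (Set.Ioo α 1)) :=
    ⟨(haem.sub aemeasurable_const).aestronglyMeasurable, hg_fin⟩
  have h_int_g : ∫ u in Set.Ioo α 1, (qg F u - qa) = Ep qa := by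
    have h1 := ofReal_integral_eq_lintegral_ofReal hg_int hg_nonneg
    rw [key, hofReal qa] at h1
    exact (ENNReal.ofReal_eq_ofReal_iff
      (integral_nonneg_of_ae hg_nonneg) (hEp_nonneg qa)).1 h1
  have hvol : (volume (Set.Ioo α (1:ℝ))).toReal = 1 - α := by
    rw [Real.volume_Ioo, ENNReal.toReal_ofReal (by linarith)]
  have h_int_q : ∫ u in Set.Ioo α 1, qg F u = Ep qa + (1 - α) * qa := by
    have h2 : ∫ u in Set.Ioo α 1, qg F u
        = ∫ u in Set.Ioo α 1, ((qg F u - qa) + qa) := by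
      congr 1; funext u; ring
    rw [h2, integral_add hg_int (integrable_const qa), h_int_g, integral_const,
      measureReal_def, Measure.restrict_apply_univ, hvol, smul_eq_mul]
  have hTV : TVaR X α = qa + (1 / (1 - α)) * Ep qa := by
    rw [TVaR, intervalIntegral.integral_of_le hα1.le, integral_Ioc_eq_integral_Ioo]
    simp only [hVaR]
    rw [h_int_q]
    field_simp
    ring
  have hEtrans : ∀ c : ℝ, (∫ ω, max (X ω - c) 0 ∂volume) = Ep c := by
    intro c
    have hcont : Continuous fun x : ℝ => max (x - c) 0 :=
      (continuous_id.sub continuous_const).max continuous_const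
    simp only [hEp, hμ]
    exact (integral_map hXm hcont.aestronglyMeasurable).symm
  have hVaRα : VaR X α = qa := hVaR α
  have part1 : TVaR X α = VaR X α + 1 / (1 - α) * ∫ ω, max (X ω - VaR X α) 0 := by
    rw [hVaRα, hEtrans qa]
    exact hTV
  -- Part 2
  have hIoi : (μ (Set.Ioi qa)).toReal = 1 - α := by
    rw [measure_Ioi_eq]
    rw [show ((μ (Iic qa)).toReal) = α from hFqa]
    exact ENNReal.toReal_ofReal (by linarith)
  have hIci : 1 - α ≤ (μ (Set.Ici qa)).toReal := by
    rw [← hIoi]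
    exact ENNReal.toReal_mono (measure_ne_top _ _) (measure_mono Set.Ioi_subset_Ici_self)
  have hmain : ∀ c : ℝ, 1 / (1 - α) * Ep qa + qa ≤ 1 / (1 - α) * Ep c + c := by
    intro c
    have hkpos : 0 < 1 / (1 - α) := by positivity
    have hk : 1 / (1 - α) * (1 - α) = 1 := by field_simp
    rcases le_total c qa with hc1 | hc1
    · have hpt : ∀ x : ℝ, max (x - qa) 0 + (Set.Ici qa).indicator (fun _ => qa - c) x ≤
          max (x - c) 0 := by
        intro x
        by_cases hx : x ∈ Set.Ici qa
        · rw [Set.indicator_of_mem hx]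
          have hx' : qa ≤ x := hx
          rw [max_eq_left (sub_nonneg.2 hx'), max_eq_left (by linarith)]
          linarith
        · rw [Set.indicator_of_notMem hx, add_zero]
          exact max_le_max (by linarith) le_rfl
      have hind_int : Integrable ((Set.Ici qa).indicator fun _ => qa - c) μ :=
        (integrable_const _).indicator measurableSet_Ici
      have hle : ∫ x, (max (x - qa) 0 + (Set.Ici qa).indicator (fun _ => qa - c) x) ∂μ ≤
          ∫ x, max (x - c) 0 ∂μ :=
        integral_mono (by exact (hmax_int qa).add hind_int) (hmax_int c) hpt
      rw [integral_add (hmax_int qa) hind_int, integral_indicator measurableSet_Ici,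
        setIntegral_const, measureReal_def, smul_eq_mul] at hle
      have h3 : (1 - α) * (qa - c) ≤ (μ (Set.Ici qa)).toReal * (qa - c) :=
        mul_le_mul_of_nonneg_right hIci (by linarith)
      have h4 : Ep qa + (1 - α) * (qa - c) ≤ Ep c := by linarith
      have h5 := mul_le_mul_of_nonneg_left h4 hkpos.le
      have h6 : 1 / (1 - α) * (Ep qa + (1 - α) * (qa - c))
          = 1 / (1 - α) * Ep qa + (qa - c) := by
        field_simp
      rw [h6] at h5
      linarith
    · have hpt : ∀ x : ℝ, max (x - qa) 0 ≤
          max (x - c) 0 + (Set.Ioi qa).indicator (fun _ => c - qa) x := by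
        intro x
        by_cases hx : x ∈ Set.Ioi qa
        · rw [Set.indicator_of_mem hx]
          have hx' : qa < x := hx
          rw [max_eq_left (by linarith)]
          have := le_max_left (x - c) 0
          linarith
        · rw [Set.indicator_of_notMem hx, add_zero]
          have hx' : x ≤ qa := not_lt.1 hx
          rw [max_eq_right (by linarith)]
          exact le_max_right _ _
      have hind_int : Integrable ((Set.Ioi qa).indicator fun _ => c - qa) μ :=
        (integrable_const _).indicator measurableSet_Ioi
      have hle : ∫ x, max (x - qa) 0 ∂μ ≤
          ∫ x, (max (x - c) 0 + (Set.Ioi qa).indicator (fun _ => c - qa) x) ∂μ :=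
        integral_mono (hmax_int qa) (by exact (hmax_int c).add hind_int) hpt
      rw [integral_add (hmax_int c) hind_int, integral_indicator measurableSet_Ioi,
        setIntegral_const, measureReal_def, smul_eq_mul, hIoi] at hle
      have h5 := mul_le_mul_of_nonneg_left hle hkpos.le
      have h6 : 1 / (1 - α) * (Ep c + (1 - α) * (c - qa))
          = 1 / (1 - α) * Ep c + (c - qa) := by
        field_simp
      rw [h6] at h5
      linarith
  have hKB : ∀ y : ℝ, KBLoss α y = 1 / (1 - α) * max y 0 - y := by
    intro y
    unfold KBLoss
    rcases le_total 0 y with h | h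
    · rw [max_eq_right (neg_nonpos.2 h), max_eq_left h]
      field_simp
      ring
    · rw [max_eq_left (neg_nonneg.2 h), max_eq_right h]
      simp
  have hKBint : ∀ c : ℝ, Integrable (fun x => KBLoss α (x - c)) μ := by
    intro c
    simp only [hKB]
    exact ((hmax_int c).const_mul _).sub (hid.sub (integrable_const c))
  have hsub_int : ∀ c : ℝ, Integrable (fun x : ℝ => x - c) μ := fun c =>
    hid.sub (integrable_const c)
  have hmul_int : ∀ c : ℝ, Integrable (fun x : ℝ => 1 / (1 - α) * max (x - c) 0) μ :=
    fun c => (hmax_int c).const_mul _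
  have hKBval : ∀ c : ℝ, ∫ x, KBLoss α (x - c) ∂μ
      = 1 / (1 - α) * Ep c + c - ∫ x, x ∂μ := by
    intro c
    simp only [hKB]
    rw [integral_sub (hmul_int c) (hsub_int c),
      integral_const_mul, integral_sub hid (integrable_const c), integral_const,
      probReal_univ]
    simp only [one_smul]
    ring
  have hKBcont : ∀ c : ℝ, Continuous fun x : ℝ => KBLoss α (x - c) := by
    intro c
    unfold KBLoss
    exact (continuous_const.mul ((continuous_id.sub continuous_const).max
      continuous_const)).add (((continuous_id.sub continuous_const)).neg.max continuous_const)
  have hKBW : ∀ c : ℝ, (∫ ω, KBLoss α (X ω - c) ∂volume) = ∫ x, KBLoss α (x - c) ∂μ := by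
    intro c
    rw [hμ, integral_map hXm (hKBcont c).aestronglyMeasurable]
  have hEX : (∫ ω, X ω ∂volume) = ∫ x, x ∂μ := by
    simp only [hμ]
    exact (integral_map hXm aestronglyMeasurable_id).symm
  refine ⟨part1, ⟨qa, ?_⟩, ?_⟩
  · rw [hKBW qa, hKBval qa, hTV, hEX]
    ring
  · rintro v ⟨c, rfl⟩
    rw [hKBW c, hKBval c, hTV, hEX]
    have := hmain c
    linarith
end

section
/- Suppose the asset payoffs Y = (Y₀, Y₁, …, Yₙ) are integrable, let R be an integrable random variable (the residual liability), α ∈ (0,1), and let η ∈ ℝ^{n+1} be a minimizer over β ∈ ℝ^{n+1} of E[ℓ_α(R − β·Y)]. Let β ∈ ℝ^{n+1} be any strategy with VaR_α(R − β·Y) = 0, and assume the cumulative distribution functions of R − η·Y and of R − β·Y are continuous. Then dTVaR_α(R − η·Y) ≤ dTVaR_α(R − β·Y); that is, the quantile hedging strategy minimizes the TVaR deviation of the residual among all strategies satisfying the VaR constraint. -/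
open MeasureTheory

/-- The TVaR deviation: `dTVaR_α(X) = TVaR_α(X) − E[X]`. -/
noncomputable def dTVaR {Ω : Type*} [MeasureSpace Ω] (X : Ω → ℝ) (α : ℝ) : ℝ :=
  TVaR X α - ∫ ω, X ω

namespace QHAux

open Set Filter Topology

variable {Ω : Type*} [MeasureSpace Ω] [IsProbabilityMeasure (volume : Measure Ω)]

/-- shorthand for the cdf -/
noncomputable def F (X : Ω → ℝ) (x : ℝ) : ℝ := (volume {ω | X ω ≤ x}).toReal

lemma F_nonneg (X : Ω → ℝ) (x : ℝ) : 0 ≤ F X x := ENNReal.toReal_nonneg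

lemma F_mono (X : Ω → ℝ) {x y : ℝ} (h : x ≤ y) : F X x ≤ F X y :=
  ENNReal.toReal_mono (measure_ne_top _ _)
    (measure_mono fun ω hx => le_trans hx h)

lemma exists_F_ge (X : Ω → ℝ) (hm : Measurable X) {u : ℝ} (hu : u < 1) :
    ∃ x : ℝ, u ≤ F X x := by
  have hU : ⋃ n : ℕ, {ω | X ω ≤ (n : ℝ)} = univ := by
    ext ω; simp only [mem_iUnion, mem_setOf_eq, mem_univ, iff_true]
    obtain ⟨n, hn⟩ := exists_nat_ge (X ω)
    exact ⟨n, hn⟩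
  have hT : Tendsto (fun n : ℕ => volume {ω | X ω ≤ (n : ℝ)}) atTop
      (𝓝 (volume (univ : Set Ω))) := by
    have := tendsto_measure_iUnion_atTop (μ := (volume : Measure Ω))
      (s := fun n : ℕ => {ω | X ω ≤ (n : ℝ)})
      (fun n m hnm ω h => by simp only [mem_setOf_eq] at h ⊢; exact le_trans h (Nat.cast_le.mpr hnm))
    rwa [hU] at this
  have hT' : Tendsto (fun n : ℕ => F X (n : ℝ)) atTop (𝓝 1) := by
    have h1 : (volume (univ : Set Ω)).toReal = 1 := by simp
    have := (ENNReal.tendsto_toReal (measure_ne_top _ _)).comp hT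
    rwa [h1] at this
  obtain ⟨n, hn⟩ := (hT'.eventually (eventually_gt_nhds hu)).exists
  exact ⟨n, le_of_lt hn⟩

lemma bddBelow_FSet (X : Ω → ℝ) (hm : Measurable X) {u : ℝ} (hu : 0 < u) :
    BddBelow {x : ℝ | u ≤ F X x} := by
  have hI : ⋂ n : ℕ, {ω | X ω ≤ -(n : ℝ)} = (∅ : Set Ω) := by
    ext ω; simp only [mem_iInter, mem_setOf_eq, mem_empty_iff_false, iff_false, not_forall]
    obtain ⟨n, hn⟩ := exists_nat_gt (-X ω)
    exact ⟨n, by push_neg; linarith⟩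
  have hT : Tendsto (fun n : ℕ => volume {ω | X ω ≤ -(n : ℝ)}) atTop
      (𝓝 (volume (∅ : Set Ω))) := by
    have := tendsto_measure_iInter_atTop (μ := (volume : Measure Ω))
      (s := fun n : ℕ => {ω | X ω ≤ -(n : ℝ)})
      (fun n => (hm measurableSet_Iic).nullMeasurableSet)
      (fun n m hnm ω h => by simp only [mem_setOf_eq] at h ⊢; exact le_trans h (neg_le_neg (Nat.cast_le.mpr hnm)))
      ⟨0, measure_ne_top _ _⟩
    rwa [hI] at this
  have hT' : Tendsto (fun n : ℕ => F X (-(n : ℝ))) atTop (𝓝 0) := by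
    have := (ENNReal.tendsto_toReal (by simp)).comp hT
    rw [measure_empty, ENNReal.toReal_zero] at this
    exact this
  obtain ⟨n, hn⟩ := (hT'.eventually (eventually_lt_nhds hu)).exists
  refine ⟨-(n : ℝ), fun x hx => ?_⟩
  by_contra hlt
  push_neg at hlt
  exact absurd (le_trans hx (F_mono X hlt.le)) (not_le.2 hn)

lemma VaR_le_iff (X : Ω → ℝ) (hm : Measurable X) {u : ℝ} (hu : u ∈ Ioo (0:ℝ) 1)
    (y : ℝ) : VaR X u ≤ y ↔ u ≤ F X y := by
  constructor
  · intro h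
    have hne : {x : ℝ | u ≤ F X x}.Nonempty := exists_F_ge X hm hu.2
    have key : ∀ n : ℕ, u ≤ F X (y + 1 / (n + 1)) := by
      intro n
      have hpos : (0:ℝ) < 1 / ((n : ℝ) + 1) := by positivity
      have hlt : sInf {x : ℝ | u ≤ F X x} < y + 1 / ((n : ℝ) + 1) := by
        calc sInf {x : ℝ | u ≤ F X x} ≤ y := h
        _ < y + 1 / ((n : ℝ) + 1) := by linarith
      obtain ⟨x, hx, hxy⟩ := exists_lt_of_csInf_lt hne hlt
      exact le_trans hx (F_mono X hxy.le)
    -- right continuity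
    have hIeq : ⋂ n : ℕ, {ω | X ω ≤ y + 1 / ((n : ℝ) + 1)} = {ω | X ω ≤ y} := by
      ext ω
      simp only [mem_iInter, mem_setOf_eq]
      constructor
      · intro h'
        by_contra hgt
        push_neg at hgt
        obtain ⟨n, hn⟩ := exists_nat_one_div_lt (sub_pos.2 hgt)
        linarith [h' n]
      · intro h' n; have : (0:ℝ) < 1 / ((n : ℝ) + 1) := by positivity
        linarith
    have hT : Tendsto (fun n : ℕ => volume {ω | X ω ≤ y + 1 / ((n : ℝ) + 1)}) atTop
        (𝓝 (volume {ω | X ω ≤ y})) := by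
      have := tendsto_measure_iInter_atTop (μ := (volume : Measure Ω))
        (s := fun n : ℕ => {ω | X ω ≤ y + 1 / ((n : ℝ) + 1)})
        (fun n => (hm measurableSet_Iic).nullMeasurableSet)
        (fun n m hnm ω h => by
          have h2 : 1 / ((m : ℝ) + 1) ≤ 1 / ((n : ℝ) + 1) := by
            apply one_div_le_one_div_of_le (by positivity)
            exact_mod_cast Nat.add_le_add_right hnm 1
          simp only [mem_setOf_eq] at h ⊢
          linarith)
        ⟨0, measure_ne_top _ _⟩
      rwa [hIeq] at this
    have hT' : Tendsto (fun n : ℕ => F X (y + 1 / ((n : ℝ) + 1))) atTop (𝓝 (F X y)) :=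
      (ENNReal.tendsto_toReal (measure_ne_top _ _)).comp hT
    exact ge_of_tendsto' hT' key
  · intro h
    exact csInf_le (bddBelow_FSet X hm hu.1) h

lemma VaR_mono (X : Ω → ℝ) (hm : Measurable X) {u v : ℝ} (hu : u ∈ Ioo (0:ℝ) 1)
    (hv : v ∈ Ioo (0:ℝ) 1) (huv : u ≤ v) : VaR X u ≤ VaR X v := by
  rw [VaR_le_iff X hm hu]
  exact le_trans huv ((VaR_le_iff X hm hv _).1 le_rfl)

lemma VaR_gt_set (X : Ω → ℝ) (hm : Measurable X) (y : ℝ) :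
    {u : ℝ | u ∈ Ioo (0:ℝ) 1 ∧ y < VaR X u} = Ioo (F X y) 1 := by
  ext u
  simp only [mem_setOf_eq, mem_Ioo]
  constructor
  · rintro ⟨⟨h0, h1⟩, hy⟩
    refine ⟨?_, h1⟩
    by_contra hle
    push_neg at hle
    exact absurd ((VaR_le_iff X hm ⟨h0, h1⟩ y).2 hle) (not_le.2 hy)
  · rintro ⟨hF, h1⟩
    have h0 : 0 < u := lt_of_le_of_lt (F_nonneg X y) hF
    refine ⟨⟨h0, h1⟩, ?_⟩
    by_contra hle
    push_neg at hle
    exact absurd ((VaR_le_iff X hm ⟨h0, h1⟩ y).1 hle) (not_le.2 hF)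


lemma measurable_VaR_indicator (X : Ω → ℝ) (hm : Measurable X) :
    Measurable ((Ioo (0:ℝ) 1).indicator (VaR X)) := by
  apply measurable_of_Iic
  intro c
  have hset : (Ioo (0:ℝ) 1).indicator (VaR X) ⁻¹' Iic c =
      (Ioo (0:ℝ) 1 ∩ Iic (F X c)) ∪ ((Ioo (0:ℝ) 1)ᶜ ∩ {u : ℝ | (0:ℝ) ≤ c}) := by
    ext u
    by_cases hu : u ∈ Ioo (0:ℝ) 1
    · simp [Set.indicator_of_mem hu, hu, VaR_le_iff X hm hu c, Set.mem_preimage]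
    · simp [Set.indicator_of_notMem hu, hu, Set.mem_preimage]
  rw [hset]
  refine MeasurableSet.union (measurableSet_Ioo.inter measurableSet_Iic)
    (measurableSet_Ioo.compl.inter ?_)
  by_cases hc : (0:ℝ) ≤ c
  · simp only [hc, Set.setOf_true]; exact MeasurableSet.univ
  · simp only [hc, Set.setOf_false]; exact MeasurableSet.empty

lemma aemeasurable_VaR_restrict (X : Ω → ℝ) (hm : Measurable X) :
    AEMeasurable (VaR X) (volume.restrict (Ioo (0:ℝ) 1)) := by
  refine ⟨(Ioo (0:ℝ) 1).indicator (VaR X), measurable_VaR_indicator X hm, ?_⟩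
  filter_upwards [ae_restrict_mem measurableSet_Ioo] with u hu
  rw [Set.indicator_of_mem hu]

lemma aemeasurable_VaRpos_restrict (X : Ω → ℝ) (hm : Measurable X) :
    AEMeasurable (fun u => max (VaR X u) 0) (volume.restrict (Ioo (0:ℝ) 1)) :=
  (aemeasurable_VaR_restrict X hm).max aemeasurable_const

lemma measurable_Xpos (X : Ω → ℝ) (hm : Measurable X) :
    Measurable (fun ω => max (X ω) 0) :=
  hm.max measurable_const

lemma lintegral_VaR_pos (X : Ω → ℝ) (hm : Measurable X) :
    ∫⁻ u in Ioo (0:ℝ) 1, ENNReal.ofReal (max (VaR X u) 0)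
      = ∫⁻ ω, ENNReal.ofReal (max (X ω) 0) := by
  rw [lintegral_eq_lintegral_meas_lt (f := fun u => max (VaR X u) 0) _
      (Eventually.of_forall fun u => le_max_right _ _)
      (aemeasurable_VaRpos_restrict X hm),
    lintegral_eq_lintegral_meas_lt (f := fun ω => max (X ω) 0) _
      (Eventually.of_forall fun ω => le_max_right _ _)
      (measurable_Xpos X hm).aemeasurable]
  apply setLIntegral_congr_fun measurableSet_Ioi
  intro t ht
  have h1 : {u : ℝ | t < max (VaR X u) 0} ∩ Ioo (0:ℝ) 1 = Ioo (F X t) 1 := by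
    rw [← VaR_gt_set X hm t]
    ext u
    simp only [mem_inter_iff, mem_setOf_eq, lt_max_iff]
    constructor
    · rintro ⟨h | h, hu⟩
      · exact ⟨hu, h⟩
      · exact absurd h (not_lt.2 (le_of_lt ht))
    · rintro ⟨hu, h⟩; exact ⟨Or.inl h, hu⟩
  beta_reduce
  rw [Measure.restrict_apply' measurableSet_Ioo, h1, Real.volume_Ioo]
  have h2 : {ω : Ω | t < max (X ω) 0} = {ω : Ω | X ω ≤ t}ᶜ := by
    ext ω
    simp only [mem_setOf_eq, mem_compl_iff, lt_max_iff, not_le]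
    constructor
    · rintro (h | h)
      · exact h
      · exact absurd h (not_lt.2 (le_of_lt ht))
    · exact Or.inl
  have h3 : volume {ω : Ω | X ω ≤ t}ᶜ = 1 - volume {ω : Ω | X ω ≤ t} := by
    rw [measure_compl (s := {ω : Ω | X ω ≤ t}) (hm measurableSet_Iic)
      (measure_ne_top _ _), measure_univ]
  rw [h2, h3]
  show ENNReal.ofReal (1 - F X t) = _
  rw [F, ENNReal.ofReal_sub _ ENNReal.toReal_nonneg, ENNReal.ofReal_one,
    ENNReal.ofReal_toReal (measure_ne_top _ _)]

lemma integrableOn_VaR_pos (X : Ω → ℝ) (hm : Measurable X) (hi : Integrable X volume) :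
    IntegrableOn (fun u => max (VaR X u) 0) (Ioo (0:ℝ) 1) volume := by
  constructor
  · exact (aemeasurable_VaRpos_restrict X hm).aestronglyMeasurable
  · rw [hasFiniteIntegral_iff_ofReal (f := fun u => max (VaR X u) 0) (Eventually.of_forall fun u => le_max_right _ _)]
    rw [lintegral_VaR_pos X hm]
    exact hi.pos_part.lintegral_lt_top

lemma integral_VaR_pos (X : Ω → ℝ) (hm : Measurable X) (hi : Integrable X volume) :
    ∫ u in Ioo (0:ℝ) 1, max (VaR X u) 0 = ∫ ω, max (X ω) 0 := by
  rw [integral_eq_lintegral_of_nonneg_ae (f := fun u => max (VaR X u) 0)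
      (Eventually.of_forall fun u => le_max_right _ _)
      (aemeasurable_VaRpos_restrict X hm).aestronglyMeasurable,
    integral_eq_lintegral_of_nonneg_ae (f := fun ω => max (X ω) 0)
      (Eventually.of_forall fun ω => le_max_right _ _)
      (measurable_Xpos X hm).aestronglyMeasurable,
    lintegral_VaR_pos X hm]

lemma integrableOn_VaR (X : Ω → ℝ) (hm : Measurable X) (hi : Integrable X volume)
    {α : ℝ} (hα : α ∈ Ioo (0:ℝ) 1) : IntegrableOn (VaR X) (Ioo α 1) volume := by
  have hsub : Ioo α 1 ⊆ Ioo (0:ℝ) 1 := fun u hu => ⟨lt_trans hα.1 hu.1, hu.2⟩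
  have hmeas : AEMeasurable (VaR X) (volume.restrict (Ioo α 1)) :=
    (aemeasurable_VaR_restrict X hm).mono_measure (Measure.restrict_mono hsub le_rfl)
  have hbound : IntegrableOn (fun u => max (VaR X u) 0 + |VaR X α|) (Ioo α 1) volume :=
    ((integrableOn_VaR_pos X hm hi).mono_set hsub).add
      (integrableOn_const measure_Ioo_lt_top.ne)
  apply Integrable.mono' hbound hmeas.aestronglyMeasurable
  filter_upwards [ae_restrict_mem measurableSet_Ioo] with u hu
  have h1 : VaR X α ≤ VaR X u := VaR_mono X hm hα (hsub hu) hu.1.le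
  rw [Real.norm_eq_abs, abs_le]
  constructor
  · have h3 := neg_abs_le (VaR X α)
    have h4 := le_max_right (VaR X u) (0:ℝ)
    linarith
  · have h5 := le_max_left (VaR X u) (0:ℝ)
    have h6 := abs_nonneg (VaR X α)
    linarith

lemma TVaR_core_le (X : Ω → ℝ) (hm : Measurable X) (hi : Integrable X volume)
    {α : ℝ} (hα : α ∈ Ioo (0:ℝ) 1) :
    ∫ u in α..1, VaR X u ≤ ∫ ω, max (X ω) 0 := by
  have hsub : Ioo α 1 ⊆ Ioo (0:ℝ) 1 := fun u hu => ⟨lt_trans hα.1 hu.1, hu.2⟩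
  rw [intervalIntegral.integral_of_le hα.2.le, integral_Ioc_eq_integral_Ioo]
  calc ∫ u in Ioo α 1, VaR X u ≤ ∫ u in Ioo α 1, max (VaR X u) 0 := by
        apply setIntegral_mono_on (integrableOn_VaR X hm hi hα)
          ((integrableOn_VaR_pos X hm hi).mono_set hsub) measurableSet_Ioo
        intro u _
        exact le_max_left _ _
    _ ≤ ∫ u in Ioo (0:ℝ) 1, max (VaR X u) 0 := by
        apply setIntegral_mono_set (integrableOn_VaR_pos X hm hi)
          (Eventually.of_forall fun u => le_max_right _ _)
          (HasSubset.Subset.eventuallyLE hsub)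
    _ = ∫ ω, max (X ω) 0 := integral_VaR_pos X hm hi

lemma TVaR_core_eq (X : Ω → ℝ) (hm : Measurable X) (hi : Integrable X volume)
    {α : ℝ} (hα : α ∈ Ioo (0:ℝ) 1) (h0 : VaR X α = 0) :
    ∫ u in α..1, VaR X u = ∫ ω, max (X ω) 0 := by
  have hsub : Ioo α 1 ⊆ Ioo (0:ℝ) 1 := fun u hu => ⟨lt_trans hα.1 hu.1, hu.2⟩
  have hsub2 : Ioc (0:ℝ) α ⊆ Ioo (0:ℝ) 1 := fun u hu => ⟨hu.1, lt_of_le_of_lt hu.2 hα.2⟩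
  rw [intervalIntegral.integral_of_le hα.2.le, integral_Ioc_eq_integral_Ioo]
  have e1 : ∫ u in Ioo α 1, VaR X u = ∫ u in Ioo α 1, max (VaR X u) 0 := by
    apply setIntegral_congr_fun measurableSet_Ioo
    intro u hu
    have h1 : VaR X α ≤ VaR X u := VaR_mono X hm hα (hsub hu) hu.1.le
    rw [h0] at h1
    exact (max_eq_left h1).symm
  have hdecomp : Ioc (0:ℝ) α ∪ Ioo α 1 = Ioo (0:ℝ) 1 :=
    Set.Ioc_union_Ioo_eq_Ioo hα.1.le hα.2
  have hdisj : Disjoint (Ioc (0:ℝ) α) (Ioo α 1) := by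
    rw [Set.disjoint_left]
    rintro u ⟨_, h2⟩ ⟨h3, _⟩
    exact absurd h3 (not_lt.2 h2)
  have e2 : ∫ u in Ioc (0:ℝ) α, max (VaR X u) 0 = 0 := by
    rw [setIntegral_congr_fun measurableSet_Ioc (g := fun _ => (0:ℝ))]
    · exact integral_zero _ _
    · intro u hu
      have h1 : VaR X u ≤ VaR X α := VaR_mono X hm (hsub2 hu) hα hu.2
      rw [h0] at h1
      exact max_eq_right h1
  have e3 : ∫ u in Ioo (0:ℝ) 1, max (VaR X u) 0
      = (∫ u in Ioc (0:ℝ) α, max (VaR X u) 0) + ∫ u in Ioo α 1, max (VaR X u) 0 := by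
    rw [← hdecomp]
    exact setIntegral_union hdisj measurableSet_Ioo
      ((integrableOn_VaR_pos X hm hi).mono_set hsub2)
      ((integrableOn_VaR_pos X hm hi).mono_set hsub)
  rw [e1, ← integral_VaR_pos X hm hi, e3, e2, zero_add]


lemma KBLoss_eq {α : ℝ} (hα : α < 1) (x : ℝ) :
    KBLoss α x = 1 / (1 - α) * max x 0 - x := by
  unfold KBLoss
  have h1 : (1:ℝ) - α ≠ 0 := by intro h; linarith
  have h2 : max (-x) 0 = max x 0 - x := by
    rcases le_total x 0 with h | h
    · rw [max_eq_left (by linarith : (0:ℝ) ≤ -x), max_eq_right h]; ring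
    · rw [max_eq_right (by linarith : -x ≤ (0:ℝ)), max_eq_left h]; ring
  rw [h2]
  field_simp
  ring

lemma integral_KBLoss (X : Ω → ℝ) (hi : Integrable X volume) {α : ℝ}
    (hα : α ∈ Ioo (0:ℝ) 1) :
    ∫ ω, KBLoss α (X ω) = 1 / (1 - α) * (∫ ω, max (X ω) 0) - ∫ ω, X ω := by
  have hpp : Integrable (fun ω => max (X ω) 0) volume := hi.pos_part
  have he : ∀ ω, KBLoss α (X ω) = 1 / (1 - α) * max (X ω) 0 - X ω :=
    fun ω => KBLoss_eq hα.2 _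
  rw [integral_congr_ae (Eventually.of_forall he), integral_sub (hpp.const_mul _) hi,
    integral_const_mul]

lemma dTVaR_le_KB_meas (X : Ω → ℝ) (hm : Measurable X) (hi : Integrable X volume)
    {α : ℝ} (hα : α ∈ Ioo (0:ℝ) 1) :
    dTVaR X α ≤ ∫ ω, KBLoss α (X ω) := by
  rw [integral_KBLoss X hi hα]
  unfold dTVaR TVaR
  have h1 : (0:ℝ) ≤ 1 / (1 - α) := by
    have h2 : (0:ℝ) < 1 - α := by linarith [hα.2]
    positivity
  exact sub_le_sub_right
    (mul_le_mul_of_nonneg_left (TVaR_core_le X hm hi hα) h1) _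

lemma dTVaR_eq_KB_meas (X : Ω → ℝ) (hm : Measurable X) (hi : Integrable X volume)
    {α : ℝ} (hα : α ∈ Ioo (0:ℝ) 1) (h0 : VaR X α = 0) :
    dTVaR X α = ∫ ω, KBLoss α (X ω) := by
  rw [integral_KBLoss X hi hα]
  unfold dTVaR TVaR
  rw [TVaR_core_eq X hm hi hα h0]

lemma VaR_congr {X X' : Ω → ℝ} (h : X =ᵐ[volume] X') : VaR X = VaR X' := by
  have hμ : ∀ x : ℝ, volume {ω | X ω ≤ x} = volume {ω | X' ω ≤ x} := by
    intro x
    apply measure_congr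
    rw [Filter.eventuallyEq_set]
    filter_upwards [h] with ω hω
    simp only [mem_setOf_eq, hω]
  funext u
  unfold VaR
  congr 1
  ext x
  rw [mem_setOf_eq, mem_setOf_eq, hμ x]

lemma dTVaR_le_KB (X : Ω → ℝ) (hi : Integrable X volume)
    {α : ℝ} (hα : α ∈ Ioo (0:ℝ) 1) :
    dTVaR X α ≤ ∫ ω, KBLoss α (X ω) := by
  have hsm := hi.1
  have he : X =ᵐ[volume] hsm.aemeasurable.mk X := hsm.aemeasurable.ae_eq_mk
  have hi' : Integrable (hsm.aemeasurable.mk X) volume := hi.congr he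
  have h1 : dTVaR X α = dTVaR (hsm.aemeasurable.mk X) α := by
    unfold dTVaR TVaR
    rw [VaR_congr he, integral_congr_ae he]
  have h2 : ∫ ω, KBLoss α (X ω) = ∫ ω, KBLoss α (hsm.aemeasurable.mk X ω) :=
    integral_congr_ae (he.mono fun ω hω => by simp only [hω])
  rw [h1, h2]
  exact dTVaR_le_KB_meas _ hsm.aemeasurable.measurable_mk hi' hα

lemma dTVaR_eq_KB (X : Ω → ℝ) (hi : Integrable X volume)
    {α : ℝ} (hα : α ∈ Ioo (0:ℝ) 1) (h0 : VaR X α = 0) :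
    dTVaR X α = ∫ ω, KBLoss α (X ω) := by
  have hsm := hi.1
  have he : X =ᵐ[volume] hsm.aemeasurable.mk X := hsm.aemeasurable.ae_eq_mk
  have hi' : Integrable (hsm.aemeasurable.mk X) volume := hi.congr he
  have h1 : dTVaR X α = dTVaR (hsm.aemeasurable.mk X) α := by
    unfold dTVaR TVaR
    rw [VaR_congr he, integral_congr_ae he]
  have h2 : ∫ ω, KBLoss α (X ω) = ∫ ω, KBLoss α (hsm.aemeasurable.mk X ω) :=
    integral_congr_ae (he.mono fun ω hω => by simp only [hω])
  rw [h1, h2]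
  exact dTVaR_eq_KB_meas _ hsm.aemeasurable.measurable_mk hi' hα
    (by rw [← VaR_congr he]; exact h0)

end QHAux

/-- The quantile hedging strategy minimizes the TVaR deviation of the residual
among all strategies satisfying the VaR-neutrality constraint: if `η` minimizes
`β ↦ E[ℓ_α(R − β·Y)]` and `β` satisfies `VaR_α(R − β·Y) = 0`, then (under continuity of the
residuals' cdfs) `dTVaR_α(R − η·Y) ≤ dTVaR_α(R − β·Y)`. -/
theorem quantile_hedge_minimizes_dTVaR
    {Ω : Type*} [MeasureSpace Ω] [IsProbabilityMeasure (volume : Measure Ω)]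
    (n : ℕ) (Y : Fin (n + 1) → Ω → ℝ)
    (hY : ∀ i, Integrable (Y i) volume)
    (R : Ω → ℝ) (hR : Integrable R volume)
    (α : ℝ) (hα : α ∈ Set.Ioo (0 : ℝ) 1)
    (η : Fin (n + 1) → ℝ)
    (hη : ∀ β : Fin (n + 1) → ℝ,
      (∫ ω, KBLoss α (R ω - ∑ i, η i * Y i ω))
        ≤ ∫ ω, KBLoss α (R ω - ∑ i, β i * Y i ω))
    (β : Fin (n + 1) → ℝ)
    (hβVaR : VaR (fun ω => R ω - ∑ i, β i * Y i ω) α = 0)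
    (hcdfη : Continuous fun x : ℝ =>
      (volume {ω | R ω - ∑ i, η i * Y i ω ≤ x}).toReal)
    (hcdfβ : Continuous fun x : ℝ =>
      (volume {ω | R ω - ∑ i, β i * Y i ω ≤ x}).toReal) :
    dTVaR (fun ω => R ω - ∑ i, η i * Y i ω) α
      ≤ dTVaR (fun ω => R ω - ∑ i, β i * Y i ω) α := by
  have hXη : Integrable (fun ω => R ω - ∑ i, η i * Y i ω) volume :=
    hR.sub (integrable_finset_sum _ fun i _ => (hY i).const_mul (η i))
  have hXβ : Integrable (fun ω => R ω - ∑ i, β i * Y i ω) volume :=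
    hR.sub (integrable_finset_sum _ fun i _ => (hY i).const_mul (β i))
  calc dTVaR (fun ω => R ω - ∑ i, η i * Y i ω) α
      ≤ ∫ ω, KBLoss α (R ω - ∑ i, η i * Y i ω) := QHAux.dTVaR_le_KB _ hXη hα
    _ ≤ ∫ ω, KBLoss α (R ω - ∑ i, β i * Y i ω) := hη β
    _ = dTVaR (fun ω => R ω - ∑ i, β i * Y i ω) α :=
        (QHAux.dTVaR_eq_KB _ hXβ hα hβVaR).symm
end
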